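/- arXiv:2311.00521 — 7 statements merged into one kernel-verified Lean document; each statement's English description precedes it below -/
import Mathlib

section
/- Let d ≥ 1, L > 0, σ > 0 and let f : ℝ^d → ℝ be L-smooth. Then the Gaussian smoothing f_σ is L-smooth, i.e. f_σ is differentiable and ‖∇f_σ(x) − ∇f_σ(y)‖ ≤ L‖x − y‖ for all x, y ∈ ℝ^d. -/
open MeasureTheory
open scoped Classical

/-- Gaussian smoothing of `f : ℝ^d → ℝ` with radius `σ`:
`f_σ(x) = π^(−d/2) ∫ f(x + σu) e^(−‖u‖²) du`, with `f_0 = f`. -/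
noncomputable def gsmooth {d : ℕ} (f : EuclideanSpace ℝ (Fin d) → ℝ) (σ : ℝ)
    (x : EuclideanSpace ℝ (Fin d)) : ℝ :=
  if σ = 0 then f x
  else Real.pi ^ (-(d : ℝ) / 2) *
    ∫ u : EuclideanSpace ℝ (Fin d), f (x + σ • u) * Real.exp (-‖u‖ ^ 2)

open Metric in
lemma aux_int_gauss {d : ℕ} {b : ℝ} (hb : 0 < b) :
    Integrable (fun u : EuclideanSpace ℝ (Fin d) => Real.exp (-b * ‖u‖ ^ 2)) := by
  have h := (GaussianFourier.integrable_cexp_neg_mul_sq_norm_add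
    (b := (b : ℂ)) (by simpa using hb) 0 (0 : EuclideanSpace ℝ (Fin d))).norm
  simpa [Complex.norm_exp, ← Complex.ofReal_pow] using h

lemma aux_t1 (t : ℝ) : t * Real.exp (-(1/2) * t ^ 2) ≤ 1 := by
  have h1 : t ≤ Real.exp ((1/2) * t ^ 2) := by
    have := Real.add_one_le_exp ((1/2) * t ^ 2)
    nlinarith [sq_nonneg (t - 1)]
  have h2 : (0:ℝ) < Real.exp (-(1/2) * t ^ 2) := Real.exp_pos _
  calc t * Real.exp (-(1/2) * t ^ 2)
      ≤ Real.exp ((1/2) * t ^ 2) * Real.exp (-(1/2) * t ^ 2) :=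
        mul_le_mul_of_nonneg_right h1 h2.le
    _ = 1 := by rw [← Real.exp_add]; norm_num

lemma aux_t2 (t : ℝ) : t ^ 2 * Real.exp (-(1/2) * t ^ 2) ≤ 2 := by
  have h1 : t ^ 2 ≤ 2 * Real.exp ((1/2) * t ^ 2) := by
    have := Real.add_one_le_exp ((1/2) * t ^ 2)
    nlinarith
  have h2 : (0:ℝ) < Real.exp (-(1/2) * t ^ 2) := Real.exp_pos _
  calc t ^ 2 * Real.exp (-(1/2) * t ^ 2)
      ≤ (2 * Real.exp ((1/2) * t ^ 2)) * Real.exp (-(1/2) * t ^ 2) :=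
        mul_le_mul_of_nonneg_right h1 h2.le
    _ = 2 := by rw [mul_assoc, ← Real.exp_add]; norm_num

lemma aux_exp_split (t : ℝ) :
    Real.exp (-t ^ 2) = Real.exp (-(1/2) * t ^ 2) * Real.exp (-(1/2) * t ^ 2) := by
  rw [← Real.exp_add]; ring_nf

lemma aux_int_norm_gauss {d : ℕ} :
    Integrable (fun u : EuclideanSpace ℝ (Fin d) => ‖u‖ * Real.exp (-‖u‖ ^ 2)) := by
  refine (aux_int_gauss (b := (1/2)) (by norm_num)).mono'
    (Continuous.aestronglyMeasurable (by fun_prop)) ?_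
  filter_upwards with u
  have h1 := aux_t1 ‖u‖
  have h2 : (0:ℝ) < Real.exp (-(1/2) * ‖u‖ ^ 2) := Real.exp_pos _
  rw [Real.norm_eq_abs, abs_of_nonneg (by positivity), aux_exp_split]
  calc ‖u‖ * (Real.exp (-(1/2) * ‖u‖ ^ 2) * Real.exp (-(1/2) * ‖u‖ ^ 2))
      = (‖u‖ * Real.exp (-(1/2) * ‖u‖ ^ 2)) * Real.exp (-(1/2) * ‖u‖ ^ 2) := by ring
    _ ≤ 1 * Real.exp (-(1/2) * ‖u‖ ^ 2) := mul_le_mul_of_nonneg_right h1 h2.le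
    _ = Real.exp (-(1/2) * ‖u‖ ^ 2) := one_mul _

lemma aux_int_sq_norm_gauss {d : ℕ} :
    Integrable (fun u : EuclideanSpace ℝ (Fin d) => ‖u‖ ^ 2 * Real.exp (-‖u‖ ^ 2)) := by
  refine ((aux_int_gauss (b := (1/2)) (by norm_num)).const_mul 2).mono'
    (Continuous.aestronglyMeasurable (by fun_prop)) ?_
  filter_upwards with u
  have h1 := aux_t2 ‖u‖
  have h2 : (0:ℝ) < Real.exp (-(1/2) * ‖u‖ ^ 2) := Real.exp_pos _
  rw [Real.norm_eq_abs, abs_of_nonneg (by positivity), aux_exp_split]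
  calc ‖u‖ ^ 2 * (Real.exp (-(1/2) * ‖u‖ ^ 2) * Real.exp (-(1/2) * ‖u‖ ^ 2))
      = (‖u‖ ^ 2 * Real.exp (-(1/2) * ‖u‖ ^ 2)) * Real.exp (-(1/2) * ‖u‖ ^ 2) := by ring
    _ ≤ 2 * Real.exp (-(1/2) * ‖u‖ ^ 2) := mul_le_mul_of_nonneg_right h1 h2.le


set_option maxHeartbeats 2000000 in
set_option synthInstance.maxHeartbeats 400000 in
open Metric in
/-- If `f` is `L`-smooth, then `f_σ` is `L`-smooth. -/
theorem gsmooth_lsmooth {d : ℕ} (hd : 1 ≤ d) {L σ : ℝ} (hL : 0 < L) (hσ : 0 < σ)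
    (f : EuclideanSpace ℝ (Fin d) → ℝ)
    (hdiff : Differentiable ℝ f)
    (hgrad : ∀ x y, ‖gradient f x - gradient f y‖ ≤ L * ‖x - y‖) :
    Differentiable ℝ (gsmooth f σ) ∧
      ∀ x y, ‖gradient (gsmooth f σ) x - gradient (gsmooth f σ) y‖ ≤ L * ‖x - y‖ := by
  classical
  set w : EuclideanSpace ℝ (Fin d) → ℝ := fun u => Real.exp (-‖u‖ ^ 2) with hwdef
  have hw_pos : ∀ u, 0 < w u := fun u => Real.exp_pos _
  have hw_cont : Continuous w := by fun_prop
  have hw_int : Integrable w := by simpa using aux_int_gauss (d := d) one_pos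
  have hnw_int : Integrable (fun u : EuclideanSpace ℝ (Fin d) => ‖u‖ * w u) :=
    aux_int_norm_gauss
  have hsqw_int : Integrable (fun u : EuclideanSpace ℝ (Fin d) => ‖u‖ ^ 2 * w u) :=
    aux_int_sq_norm_gauss
  -- fderiv of f is Lipschitz
  have hDf : ∀ x y, ‖fderiv ℝ f x - fderiv ℝ f y‖ ≤ L * ‖x - y‖ := by
    intro x y
    have h1 : ∀ z, fderiv ℝ f z
        = (InnerProductSpace.toDual ℝ (EuclideanSpace ℝ (Fin d))) (gradient f z) := by
      intro z; rw [gradient, LinearIsometryEquiv.apply_symm_apply]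
    rw [h1 x, h1 y, ← map_sub, LinearIsometryEquiv.norm_map]
    exact hgrad x y
  have hDf_cont : Continuous (fderiv ℝ f) := by
    refine LipschitzWith.continuous (K := L.toNNReal) ?_
    refine LipschitzWith.of_dist_le_mul fun x y => ?_
    rw [dist_eq_norm, dist_eq_norm]
    simpa [Real.coe_toNNReal L hL.le] using hDf x y
  -- quadratic growth of f
  have hgrowth : ∀ x z : EuclideanSpace ℝ (Fin d),
      |f z - f x| ≤ (‖fderiv ℝ f x‖ + L * ‖z - x‖) * ‖z - x‖ := by
    intro x z
    have hs : Convex ℝ (closedBall x ‖z - x‖) := convex_closedBall _ _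
    have hb : ∀ p ∈ closedBall x ‖z - x‖,
        ‖fderiv ℝ f p‖ ≤ ‖fderiv ℝ f x‖ + L * ‖z - x‖ := by
      intro p hp
      have h3 : ‖p - x‖ ≤ ‖z - x‖ := by
        rw [mem_closedBall, dist_eq_norm] at hp; exact hp
      calc ‖fderiv ℝ f p‖ ≤ ‖fderiv ℝ f x‖ + ‖fderiv ℝ f p - fderiv ℝ f x‖ := by
            have := norm_sub_norm_le (fderiv ℝ f p) (fderiv ℝ f x); linarith
        _ ≤ ‖fderiv ℝ f x‖ + L * ‖p - x‖ := by linarith [hDf p x]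
        _ ≤ ‖fderiv ℝ f x‖ + L * ‖z - x‖ := by nlinarith
    have := hs.norm_image_sub_le_of_norm_fderiv_le
      (fun p _ => hdiff p) hb (mem_closedBall_self (norm_nonneg _))
      (by rw [mem_closedBall, dist_eq_norm])
    simpa [Real.norm_eq_abs] using this
  -- integrability of the derivative integrand
  have hDint : ∀ z : EuclideanSpace ℝ (Fin d),
      Integrable (fun u : EuclideanSpace ℝ (Fin d) => w u • fderiv ℝ f (z + σ • u)) := by
    intro z
    refine Integrable.mono'
      (g := fun u => ‖fderiv ℝ f z‖ * w u + (L * σ) * (‖u‖ * w u))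
      (((hw_int.const_mul _)).add ((hnw_int.const_mul _)))
      (Continuous.aestronglyMeasurable ?_) ?_
    · exact hw_cont.smul (hDf_cont.comp (continuous_const.add (continuous_id.const_smul σ)))
    · filter_upwards with u
      rw [norm_smul, Real.norm_eq_abs, abs_of_pos (hw_pos u)]
      have h1 : ‖fderiv ℝ f (z + σ • u)‖ ≤ ‖fderiv ℝ f z‖ + L * (σ * ‖u‖) := by
        have h2 := hDf (z + σ • u) z
        have h3 : ‖z + σ • u - z‖ = σ * ‖u‖ := by
          rw [add_sub_cancel_left, norm_smul, Real.norm_eq_abs, abs_of_pos hσ]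
        rw [h3] at h2
        have := norm_sub_norm_le (fderiv ℝ f (z + σ • u)) (fderiv ℝ f z)
        linarith
      have hwu := (hw_pos u).le
      nlinarith [hw_pos u]
  -- key derivative computation
  have key : ∀ x₀ : EuclideanSpace ℝ (Fin d),
      HasFDerivAt (fun x => ∫ u : EuclideanSpace ℝ (Fin d), f (x + σ • u) * w u)
        (∫ u : EuclideanSpace ℝ (Fin d), w u • fderiv ℝ f (x₀ + σ • u)) x₀ := by
    intro x₀
    apply hasFDerivAt_integral_of_dominated_of_fderiv_le
      (F' := fun x u => w u • fderiv ℝ f (x + σ • u))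
      (bound := fun u => (‖fderiv ℝ f x₀‖ + L) * w u + (L * σ) * (‖u‖ * w u))
      (s := ball x₀ 1) (ball_mem_nhds x₀ one_pos)
    · filter_upwards with x
      exact (((hdiff.continuous.comp
        (continuous_const.add (continuous_id.const_smul σ))).mul hw_cont)).aestronglyMeasurable
    · -- Integrable (fun u => f (x₀ + σ • u) * w u)
      refine Integrable.mono'
        (g := fun u => (|f x₀| * w u + (‖fderiv ℝ f x₀‖ * σ) * (‖u‖ * w u))
            + (L * σ ^ 2) * (‖u‖ ^ 2 * w u))
        (((hw_int.const_mul _).add (hnw_int.const_mul _)).add (hsqw_int.const_mul _))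
        (Continuous.aestronglyMeasurable ((hdiff.continuous.comp
          (continuous_const.add (continuous_id.const_smul σ))).mul hw_cont)) ?_
      filter_upwards with u
      rw [Real.norm_eq_abs, abs_mul, abs_of_pos (hw_pos u)]
      have h1 := hgrowth x₀ (x₀ + σ • u)
      have h3 : ‖x₀ + σ • u - x₀‖ = σ * ‖u‖ := by
        rw [add_sub_cancel_left, norm_smul, Real.norm_eq_abs, abs_of_pos hσ]
      rw [h3] at h1
      have h4 : |f (x₀ + σ • u)| ≤ |f x₀| + (‖fderiv ℝ f x₀‖ + L * (σ * ‖u‖)) * (σ * ‖u‖) := by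
        have := abs_sub_abs_le_abs_sub (f (x₀ + σ • u)) (f x₀)
        linarith
      have hwu := (hw_pos u).le
      nlinarith [hw_pos u, norm_nonneg u, abs_nonneg (f x₀), norm_nonneg (fderiv ℝ f x₀)]
    · exact (hDint x₀).aestronglyMeasurable
    · -- bound
      filter_upwards with u
      intro x hx
      have hns : ‖w u • fderiv ℝ f (x + σ • u)‖ = w u * ‖fderiv ℝ f (x + σ • u)‖ := by
        rw [norm_smul, Real.norm_eq_abs, abs_of_pos (hw_pos u)]
      rw [hns]
      have h1 : ‖fderiv ℝ f (x + σ • u)‖ ≤ ‖fderiv ℝ f x₀‖ + L * (1 + σ * ‖u‖) := by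
        have h2 := hDf (x + σ • u) x₀
        have h3 : ‖x + σ • u - x₀‖ ≤ 1 + σ * ‖u‖ := by
          calc ‖x + σ • u - x₀‖ = ‖x - x₀ + σ • u‖ := by rw [add_sub_right_comm]
            _ ≤ ‖x - x₀‖ + ‖σ • u‖ := norm_add_le _ _
            _ ≤ 1 + σ * ‖u‖ := by
                have hx1 : ‖x - x₀‖ ≤ 1 := by
                  rw [mem_ball, dist_eq_norm] at hx; linarith
                rw [norm_smul, Real.norm_eq_abs, abs_of_pos hσ]; linarith
        have := norm_sub_norm_le (fderiv ℝ f (x + σ • u)) (fderiv ℝ f x₀)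
        nlinarith
      have hwu := (hw_pos u).le
      nlinarith [hw_pos u]
    · exact ((hw_int.const_mul _)).add ((hnw_int.const_mul _))
    · -- differentiability of the integrand
      filter_upwards with u
      intro x hx
      have h1 : HasFDerivAt (fun y : EuclideanSpace ℝ (Fin d) => y + σ • u)
          (ContinuousLinearMap.id ℝ (EuclideanSpace ℝ (Fin d))) x :=
        (hasFDerivAt_id x).add_const _
      have h2 : HasFDerivAt f (fderiv ℝ f (x + σ • u)) (x + σ • u) :=
        (hdiff _).hasFDerivAt
      have h3 := (h2.comp x h1).mul_const (w u)
      simpa [ContinuousLinearMap.comp_id] using h3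
  -- the smoothed function
  set c : ℝ := Real.pi ^ (-(d : ℝ) / 2) with hcdef
  have hc_pos : 0 < c := Real.rpow_pos_of_pos Real.pi_pos _
  have hGeq : gsmooth f σ = fun x => c * ∫ u : EuclideanSpace ℝ (Fin d), f (x + σ • u) * w u := by
    funext x
    simp only [gsmooth, if_neg hσ.ne']
    rfl
  have keyG : ∀ x₀ : EuclideanSpace ℝ (Fin d),
      HasFDerivAt (gsmooth f σ)
        (c • ∫ u : EuclideanSpace ℝ (Fin d), w u • fderiv ℝ f (x₀ + σ • u)) x₀ := by
    intro x₀
    rw [hGeq]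
    exact (key x₀).const_mul c
  refine ⟨fun x => (keyG x).differentiableAt, ?_⟩
  intro x y
  have hfx := (keyG x).fderiv
  have hfy := (keyG y).fderiv
  rw [gradient, gradient, ← map_sub, LinearIsometryEquiv.norm_map, hfx, hfy, ← smul_sub,
    ← integral_sub (hDint x) (hDint y)]
  have hIv : (∫ u : EuclideanSpace ℝ (Fin d), w u) = Real.pi ^ ((d : ℝ) / 2) := by
    have h := GaussianFourier.integral_rexp_neg_mul_sq_norm
      (V := EuclideanSpace ℝ (Fin d)) one_pos
    simpa [finrank_euclideanSpace_fin] using h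
  have hcmul : c * Real.pi ^ ((d : ℝ) / 2) = 1 := by
    rw [hcdef, ← Real.rpow_add Real.pi_pos, neg_div, neg_add_cancel, Real.rpow_zero]
  calc ‖c • ∫ u : EuclideanSpace ℝ (Fin d),
        (w u • fderiv ℝ f (x + σ • u) - w u • fderiv ℝ f (y + σ • u))‖
      = c * ‖∫ u : EuclideanSpace ℝ (Fin d),
        (w u • fderiv ℝ f (x + σ • u) - w u • fderiv ℝ f (y + σ • u))‖ := by
        rw [norm_smul, Real.norm_eq_abs, abs_of_pos hc_pos]
    _ ≤ c * ∫ u : EuclideanSpace ℝ (Fin d), w u * (L * ‖x - y‖) := by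
        refine mul_le_mul_of_nonneg_left ?_ hc_pos.le
        refine norm_integral_le_of_norm_le (hw_int.mul_const _) ?_
        filter_upwards with u
        rw [← smul_sub, norm_smul, Real.norm_eq_abs, abs_of_pos (hw_pos u)]
        refine mul_le_mul_of_nonneg_left ?_ (hw_pos u).le
        have h1 := hDf (x + σ • u) (y + σ • u)
        have h2 : x + σ • u - (y + σ • u) = x - y := by abel
        rwa [h2] at h1
    _ = c * (Real.pi ^ ((d : ℝ) / 2) * (L * ‖x - y‖)) := by
        rw [integral_mul_const, hIv]
    _ = L * ‖x - y‖ := by rw [← mul_assoc, hcmul, one_mul]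
end

section
/- Let d ≥ 1, σ > 0 and let f : ℝ^d → ℝ be continuous with m := inf_{y ∈ ℝ^d} f(y) > −∞. If there exists x ∈ ℝ^d such that f_σ(x) = m, then f is constant on ℝ^d. -/
open MeasureTheory
open scoped Classical

/-- Gaussian smoothing with values in `(−∞, +∞]` (for `f` bounded below):
the value is `+∞` when the defining integral is not finite. -/
noncomputable def gsmoothE {d : ℕ} (f : EuclideanSpace ℝ (Fin d) → ℝ) (σ : ℝ)
    (x : EuclideanSpace ℝ (Fin d)) : EReal :=
  if σ = 0 then (f x : EReal)
  else if Integrable (fun u : EuclideanSpace ℝ (Fin d) => f (x + σ • u) * Real.exp (-‖u‖ ^ 2)) then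
    ((Real.pi ^ (-(d : ℝ) / 2) *
      ∫ u : EuclideanSpace ℝ (Fin d), f (x + σ • u) * Real.exp (-‖u‖ ^ 2) : ℝ) : EReal)
  else ⊤

lemma gauss_integrable {d : ℕ} :
    Integrable (fun u : EuclideanSpace ℝ (Fin d) => Real.exp (-‖u‖ ^ 2)) := by
  have h := GaussianFourier.integrable_cexp_neg_mul_sq_norm_add
    (V := EuclideanSpace ℝ (Fin d)) (b := 1) (by norm_num) 0 0
  have h2 := h.norm
  refine h2.congr (Filter.Eventually.of_forall fun u => ?_)
  simp [Complex.norm_exp, ← Complex.ofReal_pow]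

lemma gauss_integral {d : ℕ} :
    ∫ u : EuclideanSpace ℝ (Fin d), Real.exp (-‖u‖ ^ 2) = Real.pi ^ ((d : ℝ) / 2) := by
  have h := GaussianFourier.integral_rexp_neg_mul_sq_norm
    (V := EuclideanSpace ℝ (Fin d)) (b := 1) (by norm_num)
  simpa [finrank_euclideanSpace_fin] using h

/-- If `f` is continuous and bounded below with infimum `m`, and
`f_σ(x) = m` for some `x`, then `f` is constant. -/
theorem gsmooth_eq_inf_imp_const {d : ℕ} (hd : 1 ≤ d) {σ : ℝ} (hσ : 0 < σ)
    (f : EuclideanSpace ℝ (Fin d) → ℝ) (hcont : Continuous f)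
    (hbdd : BddBelow (Set.range f))
    (hx : ∃ x, gsmoothE f σ x = ((⨅ y, f y : ℝ) : EReal)) :
    ∀ x y, f x = f y := by
  obtain ⟨x₀, hx₀⟩ := hx
  set m : ℝ := ⨅ y, f y with hm
  have hσ0 : σ ≠ 0 := ne_of_gt hσ
  rw [gsmoothE, if_neg hσ0] at hx₀
  by_cases hI : Integrable
      (fun u : EuclideanSpace ℝ (Fin d) => f (x₀ + σ • u) * Real.exp (-‖u‖ ^ 2))
  swap
  · rw [if_neg hI] at hx₀; exact absurd hx₀ (by simp)
  rw [if_pos hI] at hx₀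
  have hEq : Real.pi ^ (-(d : ℝ) / 2) *
      ∫ u : EuclideanSpace ℝ (Fin d), f (x₀ + σ • u) * Real.exp (-‖u‖ ^ 2) = m := by
    exact_mod_cast hx₀
  have hpi : (0 : ℝ) < Real.pi := Real.pi_pos
  have hint : ∫ u : EuclideanSpace ℝ (Fin d), f (x₀ + σ • u) * Real.exp (-‖u‖ ^ 2)
      = m * Real.pi ^ ((d : ℝ) / 2) := by
    have hne : Real.pi ^ (-(d : ℝ) / 2) ≠ 0 := by positivity
    field_simp at hEq ⊢
    rw [mul_comm] at hEq
    rw [← hEq, mul_assoc, ← Real.rpow_add hpi, neg_add_cancel, Real.rpow_zero, mul_one]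
  have hmle : ∀ y, m ≤ f y := fun y => ciInf_le hbdd y
  -- the nonnegative function
  set h : EuclideanSpace ℝ (Fin d) → ℝ :=
    fun u => (f (x₀ + σ • u) - m) * Real.exp (-‖u‖ ^ 2) with hh
  have hInt2 : Integrable (fun u : EuclideanSpace ℝ (Fin d) => m * Real.exp (-‖u‖ ^ 2)) :=
    gauss_integrable.const_mul m
  have hIh : Integrable h := by
    have := hI.sub hInt2
    refine this.congr (Filter.Eventually.of_forall fun u => ?_)
    simp [hh, sub_mul]
  have hnonneg : 0 ≤ h := fun u => mul_nonneg (sub_nonneg.2 (hmle _)) (Real.exp_nonneg _)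
  have hzero : ∫ u, h u = 0 := by
    have : ∫ u, h u = (∫ u : EuclideanSpace ℝ (Fin d), f (x₀ + σ • u) * Real.exp (-‖u‖ ^ 2))
        - ∫ u : EuclideanSpace ℝ (Fin d), m * Real.exp (-‖u‖ ^ 2) := by
      rw [← integral_sub hI hInt2]
      congr 1 with u
      simp [hh, sub_mul]
    rw [this, hint, integral_const_mul, gauss_integral, sub_self]
  have hae : h =ᵐ[volume] 0 := by
    rw [← integral_eq_zero_iff_of_nonneg hnonneg hIh]
    exact hzero
  have hhcont : Continuous h := by
    have hc1 : Continuous fun u : EuclideanSpace ℝ (Fin d) => x₀ + σ • u :=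
      continuous_const.add (continuous_id.const_smul σ)
    have hc2 : Continuous fun u : EuclideanSpace ℝ (Fin d) => Real.exp (-‖u‖ ^ 2) :=
      Real.continuous_exp.comp ((continuous_norm.pow 2).neg)
    exact ((hcont.comp hc1).sub continuous_const).mul hc2
  have hall : ∀ u, h u = 0 := by
    have := (hhcont.ae_eq_iff_eq volume continuous_const).1 hae
    intro u; exact congrFun this u
  have hfm : ∀ y, f y = m := by
    intro y
    have hu := hall (σ⁻¹ • (y - x₀))
    rw [hh] at hu
    simp only at hu
    have hx : x₀ + σ • σ⁻¹ • (y - x₀) = y := by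
      rw [smul_smul, mul_inv_cancel₀ hσ0, one_smul]; abel
    rw [hx] at hu
    rcases mul_eq_zero.1 hu with h1 | h2
    · linarith [sub_eq_zero.1 h1]
    · exact absurd h2 (Real.exp_ne_zero _)
  intro x y; rw [hfm x, hfm y]
end

section
/- Let d ≥ 1, M > 0, τ ≥ σ ≥ 0, and let f : ℝ^d → ℝ be M-Lipschitz. Then for every x ∈ ℝ^d, |f_τ(x) − f_σ(x)| ≤ M·|τ − σ|·√(d/2). -/
open MeasureTheory
open scoped Classical

open Real

lemma integrable_sq_gauss : Integrable fun t : ℝ => t ^ 2 * rexp (-t ^ 2) := by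
  have := integrable_rpow_mul_exp_neg_mul_sq (b := 1) one_pos (s := 2) (by norm_num)
  simpa [Real.rpow_natCast] using this

lemma int_sq_gauss : ∫ t : ℝ, t ^ 2 * rexp (-t ^ 2) = Real.sqrt π / 2 := by
  have h1 := integral_comp_abs (f := fun x : ℝ => x ^ 2 * rexp (-x ^ 2))
  simp only [sq_abs] at h1
  rw [h1]
  have h2 : ∀ x ∈ Set.Ioi (0:ℝ), x ^ 2 * rexp (-x ^ 2)
      = x ^ (2:ℝ) * rexp (-x ^ (2:ℝ)) := by
    intro x hx
    rw [show ((2:ℝ) = ((2:ℕ):ℝ)) by norm_num, Real.rpow_natCast]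
  rw [setIntegral_congr_fun measurableSet_Ioi h2,
    integral_rpow_mul_exp_neg_rpow two_pos (by norm_num),
    show ((2:ℝ)+1)/2 = 1/2 + 1 by norm_num,
    Real.Gamma_add_one (by norm_num), Real.Gamma_one_half_eq]
  ring

lemma euclid_norm_sq (d : ℕ) (v : Fin d → ℝ) :
    ‖(MeasurableEquiv.toLp 2 (Fin d → ℝ)).symm.symm v‖ ^ 2 = ∑ i, v i ^ 2 := by
  simp only [MeasurableEquiv.symm_symm, MeasurableEquiv.coe_toLp,
    EuclideanSpace.norm_eq, PiLp.toLp_apply, Real.norm_eq_abs, sq_abs]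
  rw [Real.sq_sqrt]
  exact Finset.sum_nonneg fun i _ => by positivity

lemma euclid_integral_eq (d : ℕ) (g : ℝ → ℝ) :
    ∫ u : EuclideanSpace ℝ (Fin d), g (‖u‖ ^ 2)
      = ∫ v : Fin d → ℝ, g (∑ i, v i ^ 2) := by
  have h := (EuclideanSpace.volume_preserving_symm_measurableEquiv_toLp (Fin d)).symm
  rw [← h.integral_comp (MeasurableEquiv.measurableEmbedding _)]
  simp only [Function.comp_apply, euclid_norm_sq]

lemma euclid_integrable_iff (d : ℕ) (g : ℝ → ℝ) :
    Integrable (fun u : EuclideanSpace ℝ (Fin d) => g (‖u‖ ^ 2))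
      ↔ Integrable (fun v : Fin d → ℝ => g (∑ i, v i ^ 2)) := by
  have h := (EuclideanSpace.volume_preserving_symm_measurableEquiv_toLp (Fin d))
  rw [← MeasurePreserving.integrable_comp_emb h.symm (MeasurableEquiv.measurableEmbedding _)]
  simp only [Function.comp_def, euclid_norm_sq]

lemma exp_neg_sum_eq {d : ℕ} (v : Fin d → ℝ) :
    rexp (-∑ i, v i ^ 2) = ∏ i, rexp (-(v i ^ 2)) := by
  rw [← Real.exp_sum, ← Finset.sum_neg_distrib]

lemma gauss1d : Integrable (fun t : ℝ => rexp (-t ^ 2))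
    ∧ ∫ t : ℝ, rexp (-t ^ 2) = Real.sqrt π := by
  constructor
  · simpa using integrable_exp_neg_mul_sq (b := 1) one_pos
  · have := integral_gaussian 1
    simpa using this

lemma pi_integrable_exp (d : ℕ) :
    Integrable fun v : Fin d → ℝ => rexp (-∑ i, v i ^ 2) := by
  simp only [exp_neg_sum_eq]
  exact Integrable.fintype_prod (f := fun (_ : Fin d) (t : ℝ) => rexp (-(t ^ 2)))
    fun i => by simpa using gauss1d.1

lemma pi_int_exp (d : ℕ) :
    ∫ v : Fin d → ℝ, rexp (-∑ i, v i ^ 2) = Real.sqrt π ^ d := by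
  simp only [exp_neg_sum_eq]
  erw [integral_fintype_prod_eq_pow (ι := Fin d) (f := fun t : ℝ => rexp (-(t ^ 2)))]
  simp only [Fintype.card_fin]
  congr 1
  simpa using gauss1d.2

lemma term_eq_prod {d : ℕ} (i : Fin d) (v : Fin d → ℝ) :
    v i ^ 2 * rexp (-∑ j, v j ^ 2)
      = ∏ j, ((if j = i then v j ^ 2 else 1) * rexp (-(v j ^ 2))) := by
  rw [Finset.prod_mul_distrib, Finset.prod_ite_eq', exp_neg_sum_eq]
  simp

lemma term_integrable {d : ℕ} (i : Fin d) :
    Integrable fun v : Fin d → ℝ => v i ^ 2 * rexp (-∑ j, v j ^ 2) := by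
  simp only [term_eq_prod i]
  refine Integrable.fintype_prod
    (f := fun (j : Fin d) (t : ℝ) => (if j = i then t ^ 2 else 1) * rexp (-(t ^ 2))) fun j => ?_
  by_cases h : j = i
  · simpa [h] using integrable_sq_gauss
  · simpa [h] using gauss1d.1

lemma term_integral {d : ℕ} (i : Fin d) :
    ∫ v : Fin d → ℝ, v i ^ 2 * rexp (-∑ j, v j ^ 2) = Real.sqrt π ^ d / 2 := by
  simp only [term_eq_prod i]
  erw [integral_fintype_prod_eq_prod (ι := Fin d)
    (f := fun (j : Fin d) (t : ℝ) => (if j = i then t ^ 2 else 1) * rexp (-(t ^ 2)))]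
  have : ∀ j : Fin d, (∫ t : ℝ, (if j = i then t ^ 2 else 1) * rexp (-(t ^ 2)))
      = (if j = i then (2:ℝ)⁻¹ else 1) * Real.sqrt π := by
    intro j
    by_cases h : j = i
    · simp only [h, eq_self_iff_true, if_true]
      rw [int_sq_gauss]; ring
    · simp only [if_neg h, one_mul]
      simpa using gauss1d.2
  rw [Finset.prod_congr rfl fun j _ => this j, Finset.prod_mul_distrib, Finset.prod_ite_eq']
  simp [Finset.prod_const, Fintype.card_fin]
  ring

lemma pi_integrable_sq_exp (d : ℕ) :
    Integrable fun v : Fin d → ℝ => (∑ i, v i ^ 2) * rexp (-∑ i, v i ^ 2) := by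
  simp only [Finset.sum_mul]
  exact integrable_finset_sum _ fun i _ => term_integrable i

lemma pi_int_sq_exp (d : ℕ) :
    ∫ v : Fin d → ℝ, (∑ i, v i ^ 2) * rexp (-∑ i, v i ^ 2)
      = (d / 2) * Real.sqrt π ^ d := by
  simp only [Finset.sum_mul]
  rw [integral_finset_sum _ fun i _ => term_integrable i]
  simp only [term_integral, Finset.sum_const, Finset.card_univ, Fintype.card_fin, nsmul_eq_mul]
  ring

lemma E_integrable_exp (d : ℕ) :
    Integrable fun u : EuclideanSpace ℝ (Fin d) => rexp (-‖u‖ ^ 2) :=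
  (euclid_integrable_iff d (fun s => rexp (-s))).2 (pi_integrable_exp d)

lemma E_int_exp (d : ℕ) :
    ∫ u : EuclideanSpace ℝ (Fin d), rexp (-‖u‖ ^ 2) = Real.sqrt π ^ d :=
  (euclid_integral_eq d (fun s => rexp (-s))).trans (pi_int_exp d)

lemma E_integrable_sq (d : ℕ) :
    Integrable fun u : EuclideanSpace ℝ (Fin d) => ‖u‖ ^ 2 * rexp (-‖u‖ ^ 2) :=
  (euclid_integrable_iff d (fun s => s * rexp (-s))).2 (pi_integrable_sq_exp d)

lemma E_int_sq (d : ℕ) :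
    ∫ u : EuclideanSpace ℝ (Fin d), ‖u‖ ^ 2 * rexp (-‖u‖ ^ 2)
      = (d / 2) * Real.sqrt π ^ d :=
  (euclid_integral_eq d (fun s => s * rexp (-s))).trans (pi_int_sq_exp d)

lemma E_integrable_norm (d : ℕ) :
    Integrable fun u : EuclideanSpace ℝ (Fin d) => ‖u‖ * rexp (-‖u‖ ^ 2) := by
  refine Integrable.mono' ((E_integrable_exp d).add (E_integrable_sq d)) ?_ ?_
  · exact (continuous_norm.mul ((continuous_norm.pow 2).neg.rexp)).aestronglyMeasurable
  · refine Filter.Eventually.of_forall fun u => ?_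
    have he : 0 < rexp (-‖u‖ ^ 2) := Real.exp_pos _
    have hn : (0:ℝ) ≤ ‖u‖ := norm_nonneg u
    rw [Real.norm_eq_abs, abs_of_nonneg (by positivity), Pi.add_apply]
    nlinarith [mul_nonneg (sq_nonneg (‖u‖ - 1)) he.le, mul_nonneg hn he.le]

lemma E_int_norm_le {d : ℕ} (hd : 1 ≤ d) :
    ∫ u : EuclideanSpace ℝ (Fin d), ‖u‖ * rexp (-‖u‖ ^ 2)
      ≤ Real.sqrt ((d:ℝ) / 2) * Real.sqrt π ^ d := by
  set s := Real.sqrt ((d:ℝ) / 2) with hs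
  have hd1 : (1:ℝ) ≤ (d:ℝ) := by exact_mod_cast hd
  have hd0 : (0:ℝ) < (d:ℝ) / 2 := by linarith
  have hs0 : 0 < s := Real.sqrt_pos.2 hd0
  have hs2 : s ^ 2 = (d:ℝ) / 2 := Real.sq_sqrt hd0.le
  have key : ∀ u : EuclideanSpace ℝ (Fin d), ‖u‖ * rexp (-‖u‖ ^ 2)
      ≤ (2 * s)⁻¹ * (‖u‖ ^ 2 * rexp (-‖u‖ ^ 2)) + (s / 2) * rexp (-‖u‖ ^ 2) := by
    intro u
    have he : 0 < rexp (-‖u‖ ^ 2) := Real.exp_pos _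
    have h1 : 2 * s * ‖u‖ ≤ ‖u‖ ^ 2 + s ^ 2 := by nlinarith [sq_nonneg (‖u‖ - s)]
    have h2 : 2 * s * (‖u‖ * rexp (-‖u‖ ^ 2)) ≤ (‖u‖ ^ 2 + s ^ 2) * rexp (-‖u‖ ^ 2) := by
      calc 2 * s * (‖u‖ * rexp (-‖u‖ ^ 2)) = (2 * s * ‖u‖) * rexp (-‖u‖ ^ 2) := by ring
        _ ≤ _ := mul_le_mul_of_nonneg_right h1 he.le
    have h2s : (0:ℝ) < 2 * s := by linarith
    have hrhs : (2 * s)⁻¹ * (‖u‖ ^ 2 * rexp (-‖u‖ ^ 2)) + (s / 2) * rexp (-‖u‖ ^ 2)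
        = ((‖u‖ ^ 2 + s ^ 2) * rexp (-‖u‖ ^ 2)) / (2 * s) := by
      field_simp
    rw [hrhs, le_div_iff₀ h2s]
    calc ‖u‖ * rexp (-‖u‖ ^ 2) * (2 * s) = 2 * s * (‖u‖ * rexp (-‖u‖ ^ 2)) := by ring
      _ ≤ _ := h2
  have hint : Integrable fun u : EuclideanSpace ℝ (Fin d) =>
      (2 * s)⁻¹ * (‖u‖ ^ 2 * rexp (-‖u‖ ^ 2)) + (s / 2) * rexp (-‖u‖ ^ 2) :=
    ((E_integrable_sq d).const_mul _).add ((E_integrable_exp d).const_mul _)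
  calc ∫ u : EuclideanSpace ℝ (Fin d), ‖u‖ * rexp (-‖u‖ ^ 2)
      ≤ ∫ u : EuclideanSpace ℝ (Fin d),
        ((2 * s)⁻¹ * (‖u‖ ^ 2 * rexp (-‖u‖ ^ 2)) + (s / 2) * rexp (-‖u‖ ^ 2)) :=
        integral_mono (E_integrable_norm d) hint key
    _ = (2 * s)⁻¹ * ((d / 2) * Real.sqrt π ^ d) + (s / 2) * Real.sqrt π ^ d := by
        rw [integral_add (((E_integrable_sq d)).const_mul _) ((E_integrable_exp d).const_mul _),
          integral_const_mul, integral_const_mul, E_int_sq, E_int_exp]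
    _ = s * Real.sqrt π ^ d := by
        have : (d:ℝ) / 2 = s ^ 2 := hs2.symm
        rw [this]
        field_simp
        ring

lemma sqrt_pi_pow (d : ℕ) : Real.sqrt π ^ d = π ^ ((d : ℝ) / 2) := by
  rw [Real.sqrt_eq_rpow, ← Real.rpow_natCast (π ^ ((1:ℝ)/2)) d, ← Real.rpow_mul pi_pos.le]
  congr 1
  ring

lemma pi_cancel (d : ℕ) : π ^ (-(d : ℝ) / 2) * Real.sqrt π ^ d = 1 := by
  rw [sqrt_pi_pow, ← Real.rpow_add pi_pos, neg_div, neg_add_cancel, Real.rpow_zero]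

lemma smooth_integrable {d : ℕ} {M : ℝ} (hM : 0 < M) {σ : ℝ} (hσ : 0 ≤ σ)
    (f : EuclideanSpace ℝ (Fin d) → ℝ)
    (hlip : ∀ x y, |f x - f y| ≤ M * ‖x - y‖) (x : EuclideanSpace ℝ (Fin d)) :
    Integrable fun u : EuclideanSpace ℝ (Fin d) => f (x + σ • u) * rexp (-‖u‖ ^ 2) := by
  have hcf : Continuous f := by
    refine (LipschitzWith.of_dist_le_mul (K := M.toNNReal) fun a b => ?_).continuous
    rw [Real.dist_eq, dist_eq_norm, Real.coe_toNNReal _ hM.le]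
    exact hlip a b
  refine Integrable.mono'
    (((E_integrable_exp d).const_mul |f x|).add ((E_integrable_norm d).const_mul (M * σ))) ?_ ?_
  · exact ((hcf.comp (continuous_const.add (continuous_const_smul σ))).mul
      ((continuous_norm.pow 2).neg.rexp)).aestronglyMeasurable
  · refine Filter.Eventually.of_forall fun u => ?_
    have he : 0 < rexp (-‖u‖ ^ 2) := Real.exp_pos _
    have hb : |f (x + σ • u)| ≤ |f x| + M * σ * ‖u‖ := by
      have h1 := hlip (x + σ • u) x
      rw [add_sub_cancel_left, norm_smul, Real.norm_eq_abs, abs_of_nonneg hσ] at h1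
      calc |f (x + σ • u)| ≤ |f x| + |f (x + σ • u) - f x| := by
            have := abs_sub_abs_le_abs_sub (f (x + σ • u)) (f x)
            linarith [abs_abs (f (x + σ • u))]
        _ ≤ |f x| + M * σ * ‖u‖ := by rw [mul_assoc]; linarith
    rw [Real.norm_eq_abs, abs_mul, abs_of_pos he, Pi.add_apply]
    calc |f (x + σ • u)| * rexp (-‖u‖ ^ 2)
        ≤ (|f x| + M * σ * ‖u‖) * rexp (-‖u‖ ^ 2) := mul_le_mul_of_nonneg_right hb he.le
      _ = |f x| * rexp (-‖u‖ ^ 2) + M * σ * (‖u‖ * rexp (-‖u‖ ^ 2)) := by ring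

lemma gsmooth_eq {d : ℕ} {M : ℝ} (hM : 0 < M) {σ : ℝ} (hσ : 0 ≤ σ)
    (f : EuclideanSpace ℝ (Fin d) → ℝ)
    (hlip : ∀ x y, |f x - f y| ≤ M * ‖x - y‖) (x : EuclideanSpace ℝ (Fin d)) :
    gsmooth f σ x = π ^ (-(d : ℝ) / 2) *
      ∫ u : EuclideanSpace ℝ (Fin d), f (x + σ • u) * rexp (-‖u‖ ^ 2) := by
  unfold gsmooth
  by_cases h : σ = 0
  · simp only [h, eq_self_iff_true, if_true, zero_smul, add_zero]
    rw [integral_const_mul, E_int_exp,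
      show π ^ (-(d:ℝ)/2) * (f x * Real.sqrt π ^ d)
        = (π ^ (-(d:ℝ)/2) * Real.sqrt π ^ d) * f x from by ring, pi_cancel, one_mul]
  · rw [if_neg h]

/-- For `f` `M`-Lipschitz and `τ ≥ σ ≥ 0`,
`|f_τ(x) − f_σ(x)| ≤ M|τ − σ|√(d/2)`. -/
theorem gsmooth_diff_bound_lipschitz {d : ℕ} (hd : 1 ≤ d) {M σ τ : ℝ} (hM : 0 < M)
    (hσ : 0 ≤ σ) (hστ : σ ≤ τ)
    (f : EuclideanSpace ℝ (Fin d) → ℝ)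
    (hlip : ∀ x y, |f x - f y| ≤ M * ‖x - y‖) :
    ∀ x, |gsmooth f τ x - gsmooth f σ x| ≤ M * |τ - σ| * Real.sqrt (d / 2) := by
  intro x
  have hτ : 0 ≤ τ := le_trans hσ hστ
  have hτi := smooth_integrable hM hτ f hlip x
  have hσi := smooth_integrable hM hσ f hlip x
  have hA : 0 < π ^ (-(d : ℝ) / 2) := Real.rpow_pos_of_pos pi_pos _
  rw [gsmooth_eq hM hτ f hlip x, gsmooth_eq hM hσ f hlip x, ← mul_sub, abs_mul,
    abs_of_pos hA, ← integral_sub hτi hσi]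
  have habs : |∫ u : EuclideanSpace ℝ (Fin d),
        (f (x + τ • u) * rexp (-‖u‖ ^ 2) - f (x + σ • u) * rexp (-‖u‖ ^ 2))|
      ≤ ∫ u : EuclideanSpace ℝ (Fin d),
        |f (x + τ • u) * rexp (-‖u‖ ^ 2) - f (x + σ • u) * rexp (-‖u‖ ^ 2)| := by
    simpa [Real.norm_eq_abs] using norm_integral_le_integral_norm (μ := volume)
      (f := fun u : EuclideanSpace ℝ (Fin d) =>
        f (x + τ • u) * rexp (-‖u‖ ^ 2) - f (x + σ • u) * rexp (-‖u‖ ^ 2))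
  have hbound : ∫ u : EuclideanSpace ℝ (Fin d),
        |f (x + τ • u) * rexp (-‖u‖ ^ 2) - f (x + σ • u) * rexp (-‖u‖ ^ 2)|
      ≤ ∫ u : EuclideanSpace ℝ (Fin d), M * (τ - σ) * (‖u‖ * rexp (-‖u‖ ^ 2)) := by
    refine integral_mono (hτi.sub hσi).abs ((E_integrable_norm d).const_mul _) fun u => ?_
    have he : 0 < rexp (-‖u‖ ^ 2) := Real.exp_pos _
    have h1 : |f (x + τ • u) - f (x + σ • u)| ≤ M * ((τ - σ) * ‖u‖) := by
      have h2 := hlip (x + τ • u) (x + σ • u)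
      have h3 : (x + τ • u) - (x + σ • u) = (τ - σ) • u := by
        rw [add_sub_add_left_eq_sub, ← sub_smul]
      rw [h3, norm_smul, Real.norm_eq_abs, abs_of_nonneg (by linarith : (0:ℝ) ≤ τ - σ)] at h2
      exact h2
    calc |f (x + τ • u) * rexp (-‖u‖ ^ 2) - f (x + σ • u) * rexp (-‖u‖ ^ 2)|
        = |f (x + τ • u) - f (x + σ • u)| * rexp (-‖u‖ ^ 2) := by
          rw [← sub_mul, abs_mul, abs_of_pos he]
      _ ≤ (M * ((τ - σ) * ‖u‖)) * rexp (-‖u‖ ^ 2) := mul_le_mul_of_nonneg_right h1 he.le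
      _ = M * (τ - σ) * (‖u‖ * rexp (-‖u‖ ^ 2)) := by ring
  have hfinal : ∫ u : EuclideanSpace ℝ (Fin d), M * (τ - σ) * (‖u‖ * rexp (-‖u‖ ^ 2))
      ≤ M * (τ - σ) * (Real.sqrt ((d:ℝ) / 2) * Real.sqrt π ^ d) := by
    rw [integral_const_mul]
    exact mul_le_mul_of_nonneg_left (E_int_norm_le hd)
      (by nlinarith : (0:ℝ) ≤ M * (τ - σ))
  have hchain := le_trans habs (le_trans hbound hfinal)
  calc π ^ (-(d : ℝ) / 2) * |∫ u : EuclideanSpace ℝ (Fin d),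
        (f (x + τ • u) * rexp (-‖u‖ ^ 2) - f (x + σ • u) * rexp (-‖u‖ ^ 2))|
      ≤ π ^ (-(d : ℝ) / 2) * (M * (τ - σ) * (Real.sqrt ((d:ℝ) / 2) * Real.sqrt π ^ d)) :=
        mul_le_mul_of_nonneg_left hchain hA.le
    _ = (π ^ (-(d : ℝ) / 2) * Real.sqrt π ^ d) * (M * (τ - σ) * Real.sqrt ((d:ℝ) / 2)) := by ring
    _ = M * |τ - σ| * Real.sqrt ((d:ℝ) / 2) := by
        rw [pi_cancel, one_mul, abs_of_nonneg (by linarith : (0:ℝ) ≤ τ - σ)]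
end

section
/- Let d ≥ 1, M > 0, σ ≥ 0, and let f : ℝ^d → ℝ be M-Lipschitz. Suppose f attains its minimum at x⋆ and f_σ attains its minimum at x⋆_σ. Then 0 ≤ f_σ(x⋆_σ) − f(x⋆) ≤ M·σ·√(d/2). -/
open MeasureTheory
open scoped Classical

section auxGauss
open Real

lemma aux_gauss0 : ∫ x : ℝ, exp (-x^2) = sqrt π := by
  simpa using integral_gaussian 1

lemma aux_gauss2 : ∫ x : ℝ, x^2 * exp (-x^2) = sqrt π / 2 := by
  have h2 : ∫ x in Set.Ioi (0:ℝ), x^2 * exp (-x^2) = sqrt π / 4 := by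
    have h := integral_rpow_mul_exp_neg_mul_rpow (p := 2) (q := 2) (b := 1)
      two_pos (by norm_num) one_pos
    rw [show ((2:ℝ)+1)/2 = 1/2 + 1 by norm_num, Real.Gamma_add_one (by norm_num),
      Real.Gamma_one_half_eq] at h
    have hc : ∫ x in Set.Ioi (0:ℝ), x^2 * exp (-x^2)
        = ∫ x in Set.Ioi (0:ℝ), x ^ (2:ℝ) * exp (-1 * x ^ (2:ℝ)) := by
      refine setIntegral_congr_fun measurableSet_Ioi fun x hx => ?_
      rw [show x ^ (2:ℝ) = x ^ (2:ℕ) by rw [← Real.rpow_natCast x 2]; norm_num]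
      ring_nf
    rw [hc, h]
    norm_num [Real.one_rpow]
    ring
  have h1 : ∫ x : ℝ, x^2 * exp (-x^2) = 2 * ∫ x in Set.Ioi (0:ℝ), x^2 * exp (-x^2) := by
    rw [← integral_comp_abs (f := fun t => t^2 * exp (-t^2))]
    simp [sq_abs]
  rw [h1, h2]; ring

lemma aux_int_sq : Integrable (fun x : ℝ => x^2 * exp (-x^2)) := by
  have h := integrable_rpow_mul_exp_neg_mul_sq (b := 1) one_pos (s := 2) (by norm_num)
  simpa [rpow_two] using h

lemma aux_int_exp {d : ℕ} {b : ℝ} (hb : 0 < b) :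
    Integrable (fun v : EuclideanSpace ℝ (Fin d) => exp (-b * ‖v‖^2)) := by
  have h := (GaussianFourier.integrable_cexp_neg_mul_sq_norm_add
      (V := EuclideanSpace ℝ (Fin d)) (b := (b:ℂ)) (by simpa using hb) 0 0).re
  refine h.congr (Filter.Eventually.of_forall fun v => ?_)
  simp [← Complex.ofReal_pow, ← Complex.ofReal_mul, ← Complex.ofReal_neg,
    Complex.exp_ofReal_re]

lemma aux_int_exp1 {d : ℕ} :
    Integrable (fun v : EuclideanSpace ℝ (Fin d) => exp (-‖v‖^2)) := by
  simpa using aux_int_exp (d := d) one_pos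

lemma aux_mass {d : ℕ} :
    ∫ v : EuclideanSpace ℝ (Fin d), exp (-‖v‖^2) = π ^ ((d:ℝ)/2) := by
  have h := GaussianFourier.integral_rexp_neg_mul_sq_norm
    (V := EuclideanSpace ℝ (Fin d)) one_pos
  simpa [finrank_euclideanSpace_fin] using h

lemma aux_prod_form {d : ℕ} (i : Fin d) (x : Fin d → ℝ) :
    x i ^ 2 * exp (-∑ j, x j ^ 2)
      = ∏ j, ((if j = i then x j ^ 2 else 1) * exp (-(x j)^2)) := by
  rw [Finset.prod_mul_distrib, Fintype.prod_ite_eq', ← Real.exp_sum]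
  simp

lemma aux_int_coord {d : ℕ} (i : Fin d) :
    Integrable (fun x : Fin d → ℝ => x i ^ 2 * exp (-∑ j, x j ^ 2)) := by
  have h : (fun x : Fin d → ℝ => x i ^ 2 * exp (-∑ j, x j ^ 2))
      = fun x => ∏ j, ((if j = i then x j ^ 2 else 1) * exp (-(x j)^2)) := by
    funext x; exact aux_prod_form i x
  rw [h]
  refine Integrable.fintype_prod (f := fun j t => (if j = i then t^2 else 1) * exp (-t^2))
    (fun j => ?_)
  by_cases h : j = i
  · simpa [h] using aux_int_sq
  · simpa [h] using integrable_exp_neg_mul_sq one_pos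

lemma aux_sqrtpi_pow {d : ℕ} : (sqrt π) ^ d = π ^ ((d:ℝ)/2) := by
  rw [Real.sqrt_eq_rpow, ← Real.rpow_natCast (π ^ ((1:ℝ)/2)) d, ← Real.rpow_mul pi_pos.le]
  norm_num
  congr 1
  ring

lemma aux_moment2 {d : ℕ} (hd : 1 ≤ d) :
    ∫ v : EuclideanSpace ℝ (Fin d), ‖v‖^2 * exp (-‖v‖^2)
      = ((d:ℝ)/2) * π ^ ((d:ℝ)/2) := by
  have e := (EuclideanSpace.volume_preserving_symm_measurableEquiv_toLp (Fin d)).symm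
  have step1 : ∫ v : EuclideanSpace ℝ (Fin d), ‖v‖^2 * exp (-‖v‖^2)
      = ∫ x : Fin d → ℝ, (∑ i, x i ^ 2) * exp (-∑ i, x i ^ 2) := by
    rw [← e.integral_comp (MeasurableEquiv.measurableEmbedding _)
      (fun v : EuclideanSpace ℝ (Fin d) => ‖v‖^2 * exp (-‖v‖^2))]
    congr 1
    funext x
    have hn : ‖(WithLp.toLp 2 x : EuclideanSpace ℝ (Fin d))‖^2 = ∑ i, x i ^ 2 := by
      simp only [EuclideanSpace.norm_eq, Real.norm_eq_abs, sq_abs]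
      rw [Real.sq_sqrt (Finset.sum_nonneg fun i _ => sq_nonneg _)]
    simp only [MeasurableEquiv.symm_symm, MeasurableEquiv.coe_toLp]
    rw [hn]
  have step2 : ∀ i : Fin d, ∫ x : Fin d → ℝ, x i ^ 2 * exp (-∑ j, x j ^ 2)
      = (sqrt π / 2) * (sqrt π) ^ (d - 1) := by
    intro i
    simp_rw [aux_prod_form i]
    rw [integral_fintype_prod_volume_eq_prod (ι := Fin d)
      (f := fun j t => (if j = i then t^2 else 1) * exp (-t^2))]
    have hval : ∀ j : Fin d, (∫ t : ℝ, (if j = i then t^2 else 1) * exp (-t^2))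
        = if j = i then sqrt π / 2 else sqrt π := by
      intro j
      by_cases h : j = i
      · simp only [h, if_true]; exact aux_gauss2
      · simp only [h, if_false, one_mul]; exact aux_gauss0
    simp_rw [hval]
    rw [← Finset.mul_prod_erase Finset.univ _ (Finset.mem_univ i), if_pos rfl,
      Finset.prod_congr rfl (fun j hj => if_neg (Finset.ne_of_mem_erase hj)),
      Finset.prod_const, Finset.card_erase_of_mem (Finset.mem_univ i),
      Finset.card_univ, Fintype.card_fin]
  rw [step1]
  simp_rw [Finset.sum_mul]
  rw [integral_finset_sum _ (fun i _ => aux_int_coord i)]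
  simp_rw [step2]
  rw [Finset.sum_const, Finset.card_univ, Fintype.card_fin, nsmul_eq_mul]
  have hpow : sqrt π * (sqrt π) ^ (d - 1) = π ^ ((d:ℝ)/2) := by
    rw [← pow_succ', Nat.sub_add_cancel hd, aux_sqrtpi_pow]
  rw [← hpow]; ring

lemma aux_texp (t : ℝ) (ht : 0 ≤ t) : t * exp (-t) ≤ exp (-((1:ℝ)/2) * t) := by
  have he : exp (t/4) * exp (t/4) = exp (t/2) := by rw [← Real.exp_add]; ring_nf
  have h := Real.add_one_le_exp (t/4)
  have h1 : t ≤ exp (t/2) := by nlinarith [sq_nonneg (1 - t/4), Real.exp_pos (t/4)]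
  calc t * exp (-t) ≤ exp (t/2) * exp (-t) := mul_le_mul_of_nonneg_right h1 (exp_nonneg _)
    _ = exp (-(1/2)*t) := by rw [← Real.exp_add]; ring_nf

lemma aux_int_normsq {d : ℕ} :
    Integrable (fun v : EuclideanSpace ℝ (Fin d) => ‖v‖^2 * exp (-‖v‖^2)) := by
  refine Integrable.mono' (aux_int_exp (d := d) (b := 1/2) (by norm_num))
    ((Continuous.mul (continuous_norm.pow 2)
      (Real.continuous_exp.comp (continuous_norm.pow 2).neg)).aestronglyMeasurable)
    (Filter.Eventually.of_forall fun v => ?_)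
  rw [Real.norm_eq_abs, abs_of_nonneg (by positivity)]
  exact aux_texp (‖v‖^2) (sq_nonneg _)

lemma aux_int_norm {d : ℕ} :
    Integrable (fun v : EuclideanSpace ℝ (Fin d) => ‖v‖ * exp (-‖v‖^2)) := by
  refine Integrable.mono' (aux_int_exp1.add aux_int_normsq)
    ((Continuous.mul continuous_norm
      (Real.continuous_exp.comp (continuous_norm.pow 2).neg)).aestronglyMeasurable)
    (Filter.Eventually.of_forall fun v => ?_)
  rw [Real.norm_eq_abs, abs_of_nonneg (by positivity)]
  simp only [Pi.add_apply]
  have h1 : ‖v‖ ≤ 1 + ‖v‖^2 := by nlinarith [sq_nonneg (1 - ‖v‖), norm_nonneg v]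
  have h2 := mul_le_mul_of_nonneg_right h1 (Real.exp_nonneg (-‖v‖^2))
  nlinarith

lemma aux_moment1 {d : ℕ} (hd : 1 ≤ d) :
    ∫ v : EuclideanSpace ℝ (Fin d), ‖v‖ * exp (-‖v‖^2)
      ≤ sqrt ((d:ℝ)/2) * π ^ ((d:ℝ)/2) := by
  set c := sqrt ((d:ℝ)/2) with hc
  have hd0 : (0:ℝ) < (d:ℝ)/2 := by
    have : (1:ℝ) ≤ (d:ℝ) := by exact_mod_cast hd
    linarith
  have hcpos : 0 < c := Real.sqrt_pos.mpr hd0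
  have hcsq : c^2 = (d:ℝ)/2 := Real.sq_sqrt hd0.le
  have hint : Integrable
      (fun v : EuclideanSpace ℝ (Fin d) =>
        (1/(2*c)) * (‖v‖^2 * exp (-‖v‖^2)) + (c/2) * exp (-‖v‖^2)) :=
    (aux_int_normsq.const_mul _).add (aux_int_exp1.const_mul _)
  have hmono : ∫ v : EuclideanSpace ℝ (Fin d), ‖v‖ * exp (-‖v‖^2)
      ≤ ∫ v : EuclideanSpace ℝ (Fin d),
        ((1/(2*c)) * (‖v‖^2 * exp (-‖v‖^2)) + (c/2) * exp (-‖v‖^2)) := by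
    refine integral_mono aux_int_norm hint fun v => ?_
    have hkey : ‖v‖ ≤ (1/(2*c)) * ‖v‖^2 + c/2 := by
      have heq : (1/(2*c)) * ‖v‖^2 + c/2 = (‖v‖^2 + c^2)/(2*c) := by
        field_simp
      rw [heq, le_div_iff₀ (by positivity)]
      nlinarith [sq_nonneg (‖v‖ - c)]
    have := Real.exp_pos (-‖v‖^2)
    nlinarith
  refine hmono.trans (le_of_eq ?_)
  rw [integral_add (aux_int_normsq.const_mul _) (aux_int_exp1.const_mul _),
    integral_const_mul, integral_const_mul, aux_moment2 hd, aux_mass]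
  field_simp
  nlinarith [Real.rpow_pos_of_pos pi_pos ((d:ℝ)/2)]

end auxGauss

/-- For `f` `M`-Lipschitz with minimizer `x⋆` of `f` and minimizer `x⋆_σ`
of `f_σ`, `0 ≤ f_σ(x⋆_σ) − f(x⋆) ≤ Mσ√(d/2)`. -/
theorem gsmooth_min_bound_lipschitz {d : ℕ} (hd : 1 ≤ d) {M σ : ℝ} (hM : 0 < M) (hσ : 0 ≤ σ)
    (f : EuclideanSpace ℝ (Fin d) → ℝ)
    (hlip : ∀ x y, |f x - f y| ≤ M * ‖x - y‖)
    (xstar xsig : EuclideanSpace ℝ (Fin d))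
    (hmin : ∀ y, f xstar ≤ f y)
    (hminsig : ∀ y, gsmooth f σ xsig ≤ gsmooth f σ y) :
    0 ≤ gsmooth f σ xsig - f xstar ∧
      gsmooth f σ xsig - f xstar ≤ M * σ * Real.sqrt (d / 2) := by
  by_cases hσ0 : σ = 0
  · subst hσ0
    have h1 : gsmooth f 0 xsig = f xsig := by simp [gsmooth]
    have h2 : gsmooth f 0 xstar = f xstar := by simp [gsmooth]
    have h3 := hminsig xstar
    rw [h1, h2] at *
    refine ⟨sub_nonneg.mpr (hmin xsig), ?_⟩
    have : M * 0 * Real.sqrt ((d:ℝ) / 2) = 0 := by ring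
    rw [this]
    linarith [hminsig xstar, h1, h2]
  · have hcont : Continuous f := by
      have hL : LipschitzWith (Real.toNNReal M) f := by
        refine LipschitzWith.of_dist_le_mul fun x y => ?_
        rw [Real.dist_eq, dist_eq_norm, Real.coe_toNNReal M hM.le]
        exact hlip x y
      exact hL.continuous
    have hfint : ∀ x : EuclideanSpace ℝ (Fin d),
        Integrable (fun u : EuclideanSpace ℝ (Fin d) =>
          f (x + σ • u) * Real.exp (-‖u‖^2)) := by
      intro x
      refine Integrable.mono'
        ((aux_int_exp1.const_mul |f x|).add (aux_int_norm.const_mul (M * σ)))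
        (by fun_prop)
        (Filter.Eventually.of_forall fun u => ?_)
      have hb : |f (x + σ • u)| ≤ |f x| + M * σ * ‖u‖ := by
        have h := hlip (x + σ • u) x
        have hn : ‖x + σ • u - x‖ = σ * ‖u‖ := by
          rw [add_sub_cancel_left, norm_smul, Real.norm_eq_abs, abs_of_nonneg hσ]
        rw [hn] at h
        have := abs_sub_abs_le_abs_sub (f (x + σ • u)) (f x)
        nlinarith
      rw [Real.norm_eq_abs, abs_mul, abs_of_nonneg (Real.exp_nonneg _)]
      simp only [Pi.add_apply]
      have he := Real.exp_nonneg (-‖u‖^2)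
      have h3 := mul_le_mul_of_nonneg_right hb he
      nlinarith
    have hmass1 : Real.pi ^ (-(d:ℝ)/2) * Real.pi ^ ((d:ℝ)/2) = 1 := by
      rw [← Real.rpow_add Real.pi_pos,
        show -(d:ℝ)/2 + (d:ℝ)/2 = 0 by ring, Real.rpow_zero]
    have hpinn : (0:ℝ) ≤ Real.pi ^ (-(d:ℝ)/2) :=
      (Real.rpow_pos_of_pos Real.pi_pos _).le
    have hconstI : Integrable (fun u : EuclideanSpace ℝ (Fin d) =>
        f xstar * Real.exp (-‖u‖^2)) := aux_int_exp1.const_mul _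
    -- lower bound
    have hlow : ∀ x, f xstar ≤ gsmooth f σ x := by
      intro x
      have hle : ∫ u : EuclideanSpace ℝ (Fin d), f xstar * Real.exp (-‖u‖^2)
          ≤ ∫ u : EuclideanSpace ℝ (Fin d), f (x + σ • u) * Real.exp (-‖u‖^2) :=
        integral_mono hconstI (hfint x) fun u =>
          mul_le_mul_of_nonneg_right (hmin _) (Real.exp_nonneg _)
      rw [integral_const_mul, aux_mass] at hle
      have hg : gsmooth f σ x = Real.pi ^ (-(d:ℝ)/2) *
          ∫ u : EuclideanSpace ℝ (Fin d), f (x + σ • u) * Real.exp (-‖u‖^2) := by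
        rw [gsmooth, if_neg hσ0]
      rw [hg]
      calc f xstar = Real.pi ^ (-(d:ℝ)/2) * (f xstar * Real.pi ^ ((d:ℝ)/2)) := by
            linear_combination (f xstar) * hmass1.symm
        _ ≤ _ := mul_le_mul_of_nonneg_left hle hpinn
    -- upper bound
    have hup : gsmooth f σ xstar ≤ f xstar + M * σ * Real.sqrt ((d:ℝ)/2) := by
      have hint2 : Integrable (fun u : EuclideanSpace ℝ (Fin d) =>
          f xstar * Real.exp (-‖u‖^2) + (M * σ) * (‖u‖ * Real.exp (-‖u‖^2))) :=
        hconstI.add (aux_int_norm.const_mul _)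
      have hle : ∫ u : EuclideanSpace ℝ (Fin d), f (xstar + σ • u) * Real.exp (-‖u‖^2)
          ≤ ∫ u : EuclideanSpace ℝ (Fin d),
            (f xstar * Real.exp (-‖u‖^2) + (M * σ) * (‖u‖ * Real.exp (-‖u‖^2))) := by
        refine integral_mono (hfint xstar) hint2 fun u => ?_
        have h := hlip (xstar + σ • u) xstar
        have hn : ‖xstar + σ • u - xstar‖ = σ * ‖u‖ := by
          rw [add_sub_cancel_left, norm_smul, Real.norm_eq_abs, abs_of_nonneg hσ]
        rw [hn] at h
        have h2 : f (xstar + σ • u) ≤ f xstar + M * σ * ‖u‖ := by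
          have := abs_le.mp h
          nlinarith
        have he := Real.exp_nonneg (-‖u‖^2)
        nlinarith
      rw [integral_add hconstI (aux_int_norm.const_mul _), integral_const_mul,
        integral_const_mul, aux_mass] at hle
      have hm1 : (M * σ) * (∫ u : EuclideanSpace ℝ (Fin d), ‖u‖ * Real.exp (-‖u‖^2))
          ≤ (M * σ) * (Real.sqrt ((d:ℝ)/2) * Real.pi ^ ((d:ℝ)/2)) :=
        mul_le_mul_of_nonneg_left (aux_moment1 hd) (by positivity)
      have hg : gsmooth f σ xstar = Real.pi ^ (-(d:ℝ)/2) *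
          ∫ u : EuclideanSpace ℝ (Fin d), f (xstar + σ • u) * Real.exp (-‖u‖^2) := by
        rw [gsmooth, if_neg hσ0]
      rw [hg]
      calc Real.pi ^ (-(d:ℝ)/2) *
            ∫ u : EuclideanSpace ℝ (Fin d), f (xstar + σ • u) * Real.exp (-‖u‖^2)
          ≤ Real.pi ^ (-(d:ℝ)/2) *
            (f xstar * Real.pi ^ ((d:ℝ)/2)
              + (M * σ) * (Real.sqrt ((d:ℝ)/2) * Real.pi ^ ((d:ℝ)/2))) := by
            refine mul_le_mul_of_nonneg_left ?_ hpinn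
            linarith
        _ = f xstar + M * σ * Real.sqrt ((d:ℝ)/2) := by
            linear_combination (f xstar + M * σ * Real.sqrt ((d:ℝ)/2)) * hmass1
    exact ⟨sub_nonneg.mpr (hlow xsig),
      by linarith [hminsig xstar, hlow xsig, hup]⟩
end

section
/- Let d ≥ 1, L > 0, σ > 0, and let f : ℝ^d → ℝ be L-smooth and bounded below. Then f_σ is differentiable, and for every x ∈ ℝ^d and every i ∈ {1, …, d}: ∂f_σ/∂x_i(x) = π^{−d/2} ∫_{ℝ^d} (∂f/∂x_i)(x + σu) e^{−‖u‖²} du, and also ∂f_σ/∂x_i(x) = (2/(σ π^{d/2})) ∫_{ℝ^d} u_i f(x + σu) e^{−‖u‖²} du; equivalently ∇f_σ(x) = (2/(σ π^{d/2})) ∫_{ℝ^d} u f(x + σu) e^{−‖u‖²} du. -/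
open MeasureTheory
open scoped Classical

set_option maxHeartbeats 1000000
set_option synthInstance.maxHeartbeats 1000000

namespace GsmoothAux

lemma gauss_integrable {d : ℕ} :
    Integrable (fun u : EuclideanSpace ℝ (Fin d) => Real.exp (-(1/2) * ‖u‖ ^ 2)) := by
  have h : Integrable (fun v : EuclideanSpace ℝ (Fin d) =>
      Complex.exp (-(1/2 : ℂ) * (‖v‖ : ℂ) ^ 2 +
        (0:ℂ) * ((inner ℝ (0 : EuclideanSpace ℝ (Fin d)) v : ℝ) : ℂ))) :=
    GaussianFourier.integrable_cexp_neg_mul_sq_norm_add (by norm_num) 0 0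
  refine h.norm.congr (Filter.Eventually.of_forall fun v => ?_)
  simp only [Complex.norm_exp]
  congr 1
  simp [Complex.add_re, Complex.mul_re, ← Complex.ofReal_pow]

lemma cube_gauss_le (t : ℝ) (ht : 0 ≤ t) :
    (1 + t) ^ 3 * Real.exp (2 * t - t ^ 2) ≤ Real.exp 13 * Real.exp (-(1/2) * t ^ 2) := by
  have h0 : 1 + t ≤ Real.exp t := by have := Real.add_one_le_exp t; linarith
  have h1 : (1 + t) ^ 3 ≤ Real.exp (3 * t) := by
    calc (1 + t) ^ 3 ≤ (Real.exp t) ^ 3 := pow_le_pow_left₀ (by linarith) h0 3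
      _ = Real.exp (3 * t) := by rw [← Real.exp_nat_mul]; norm_num
  calc (1 + t) ^ 3 * Real.exp (2 * t - t ^ 2)
      ≤ Real.exp (3 * t) * Real.exp (2 * t - t ^ 2) := by gcongr
    _ = Real.exp (5 * t - t ^ 2) := by rw [← Real.exp_add]; ring_nf
    _ ≤ Real.exp (13 + -(1/2) * t ^ 2) := by
        apply Real.exp_le_exp.2; nlinarith [sq_nonneg (t - 5)]
    _ = _ := by rw [Real.exp_add]

lemma integrable_cube_gauss {d : ℕ} :
    Integrable (fun u : EuclideanSpace ℝ (Fin d) => (1 + ‖u‖) ^ 3 * Real.exp (2 * ‖u‖ - ‖u‖ ^ 2)) := by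
  refine (gauss_integrable.const_mul (Real.exp 13)).mono'
    (Continuous.aestronglyMeasurable (by fun_prop)) (Filter.Eventually.of_forall fun u => ?_)
  rw [Real.norm_eq_abs, abs_of_nonneg (by positivity)]
  exact cube_gauss_le _ (norm_nonneg u)

lemma integrable_of_le_cube {d : ℕ} {V : Type*} [NormedAddCommGroup V]
    {g : EuclideanSpace ℝ (Fin d) → V}
    (hmeas : AEStronglyMeasurable g (volume : Measure (EuclideanSpace ℝ (Fin d)))) (M : ℝ)
    (h : ∀ u, ‖g u‖ ≤ M * ((1 + ‖u‖) ^ 3 * Real.exp (2 * ‖u‖ - ‖u‖ ^ 2))) :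
    Integrable g :=
  (integrable_cube_gauss.const_mul M).mono' hmeas (Filter.Eventually.of_forall h)

lemma exp_shift_le {d : ℕ} {u w : EuclideanSpace ℝ (Fin d)} (hw : ‖w‖ ≤ 1) :
    Real.exp (-‖u - w‖ ^ 2) ≤ Real.exp (2 * ‖u‖ - ‖u‖ ^ 2) := by
  apply Real.exp_le_exp.2
  have h1 : ‖u - w‖ ^ 2 = ‖u‖ ^ 2 - 2 * inner ℝ u w + ‖w‖ ^ 2 := by
    rw [@norm_sub_sq_real]
  have h2 : (inner ℝ u w : ℝ) ≤ ‖u‖ * ‖w‖ := real_inner_le_norm u w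
  nlinarith [norm_nonneg u, norm_nonneg w, sq_nonneg (‖w‖ : ℝ)]

lemma fderiv_eq_toDual_gradient {d : ℕ} (f : EuclideanSpace ℝ (Fin d) → ℝ) (z : EuclideanSpace ℝ (Fin d)) :
    fderiv ℝ f z = InnerProductSpace.toDual ℝ (EuclideanSpace ℝ (Fin d)) (gradient f z) := by
  rw [gradient, LinearIsometryEquiv.apply_symm_apply]

lemma norm_fderiv_eq {d : ℕ} (f : EuclideanSpace ℝ (Fin d) → ℝ) (z : EuclideanSpace ℝ (Fin d)) :
    ‖fderiv ℝ f z‖ = ‖gradient f z‖ := by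
  rw [gradient, LinearIsometryEquiv.norm_map]

lemma grad_norm_le {d : ℕ} {L : ℝ} {f : EuclideanSpace ℝ (Fin d) → ℝ}
    (hgrad : ∀ x y, ‖gradient f x - gradient f y‖ ≤ L * ‖x - y‖) (z : EuclideanSpace ℝ (Fin d)) :
    ‖gradient f z‖ ≤ ‖gradient f 0‖ + L * ‖z‖ := by
  have h1 := hgrad z 0
  have h2 := norm_sub_norm_le (gradient f z) (gradient f 0)
  simp only [sub_zero] at h1
  linarith

lemma f_growth {d : ℕ} {L : ℝ} {f : EuclideanSpace ℝ (Fin d) → ℝ}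
    (hdiff : Differentiable ℝ f)
    (hgrad : ∀ x y, ‖gradient f x - gradient f y‖ ≤ L * ‖x - y‖)
    (hL : 0 ≤ L) (x z : EuclideanSpace ℝ (Fin d)) :
    |f z| ≤ |f x| + (‖gradient f 0‖ + L * ‖x‖ + L * ‖z - x‖) * ‖z - x‖ := by
  have hC : ∀ y ∈ Metric.closedBall x ‖z - x‖, ‖fderiv ℝ f y‖ ≤
      ‖gradient f 0‖ + L * ‖x‖ + L * ‖z - x‖ := by
    intro y hy
    rw [norm_fderiv_eq]
    have h1 := grad_norm_le hgrad y
    have h3 : ‖y - x‖ ≤ ‖z - x‖ := mem_closedBall_iff_norm.1 hy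
    have h2 : ‖y‖ ≤ ‖x‖ + ‖z - x‖ := by
      calc ‖y‖ = ‖x + (y - x)‖ := by rw [add_sub_cancel]
        _ ≤ ‖x‖ + ‖y - x‖ := norm_add_le _ _
        _ ≤ ‖x‖ + ‖z - x‖ := by linarith
    nlinarith
  have key := Convex.norm_image_sub_le_of_norm_fderiv_le (fun y _ => hdiff y) hC
    (convex_closedBall x ‖z - x‖) (Metric.mem_closedBall_self (norm_nonneg _))
    (show z ∈ Metric.closedBall x ‖z - x‖ by simp [Metric.mem_closedBall, dist_eq_norm])
  have h4 : |f z| - |f x| ≤ |f z - f x| := by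
    have := abs_sub_abs_le_abs_sub (f z) (f x); linarith
  have h5 : |f z - f x| ≤ (‖gradient f 0‖ + L * ‖x‖ + L * ‖z - x‖) * ‖z - x‖ := key
  linarith


lemma linear_le_cube (A B t : ℝ) (hA : 0 ≤ A) (hB : 0 ≤ B) (ht : 0 ≤ t) :
    (A + B * t) * Real.exp (-t ^ 2) ≤ (A + B) * ((1 + t) ^ 3 * Real.exp (2 * t - t ^ 2)) := by
  have he : Real.exp (-t ^ 2) ≤ Real.exp (2 * t - t ^ 2) := Real.exp_le_exp.2 (by nlinarith)
  have hp : A + B * t ≤ (A + B) * (1 + t) ^ 3 := by nlinarith [pow_nonneg ht 3, sq_nonneg t]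
  calc (A + B * t) * Real.exp (-t ^ 2)
      ≤ ((A + B) * (1 + t) ^ 3) * Real.exp (2 * t - t ^ 2) :=
        mul_le_mul hp he (Real.exp_pos _).le (by positivity)
    _ = _ := by ring

lemma quad_le_cube (a b c t : ℝ) (ha : 0 ≤ a) (hb : 0 ≤ b) (hc : 0 ≤ c) (ht : 0 ≤ t) :
    (a + b * t + c * t ^ 2) * Real.exp (-t ^ 2) ≤
      (a + b + c) * ((1 + t) ^ 3 * Real.exp (2 * t - t ^ 2)) := by
  have he : Real.exp (-t ^ 2) ≤ Real.exp (2 * t - t ^ 2) := Real.exp_le_exp.2 (by nlinarith)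
  have hp : a + b * t + c * t ^ 2 ≤ (a + b + c) * (1 + t) ^ 3 := by
    nlinarith [pow_nonneg ht 3, sq_nonneg t, mul_nonneg hb ht, mul_nonneg hc (sq_nonneg t)]
  calc (a + b * t + c * t ^ 2) * Real.exp (-t ^ 2)
      ≤ ((a + b + c) * (1 + t) ^ 3) * Real.exp (2 * t - t ^ 2) :=
        mul_le_mul hp he (Real.exp_pos _).le (by positivity)
    _ = _ := by ring

lemma quad_mul_lin_le_cube (a b c t : ℝ) (ha : 0 ≤ a) (hb : 0 ≤ b) (hc : 0 ≤ c) (ht : 0 ≤ t) :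
    (a + b * t + c * t ^ 2) * (1 + t) ≤ (a + b + c) * (1 + t) ^ 3 := by
  nlinarith [pow_nonneg ht 3, sq_nonneg t, mul_nonneg hb ht, mul_nonneg hc (sq_nonneg t),
    mul_nonneg (mul_nonneg hc ht) (sq_nonneg t), mul_nonneg (mul_nonneg hb ht) ht]

lemma prod_bound {a b c t D P e n : ℝ} (ha : 0 ≤ a) (hb : 0 ≤ b) (hc : 0 ≤ c) (ht : 0 ≤ t)
    (hD : 0 ≤ D) (hP : P ≤ a + b * t + c * t ^ 2) (hP0 : 0 ≤ P)
    (he : e ≤ Real.exp (2 * t - t ^ 2)) (he0 : 0 ≤ e) (hn : n ≤ 1 + t) (hn0 : 0 ≤ n) :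
    D * (P * e) * n ≤ D * (a + b + c) * ((1 + t) ^ 3 * Real.exp (2 * t - t ^ 2)) := by
  have h1 : P * e ≤ (a + b * t + c * t ^ 2) * Real.exp (2 * t - t ^ 2) :=
    mul_le_mul hP he he0 (by positivity)
  have h2 : (P * e) * n ≤ ((a + b * t + c * t ^ 2) * Real.exp (2 * t - t ^ 2)) * (1 + t) :=
    mul_le_mul h1 hn hn0 (by positivity)
  have h3 : (a + b * t + c * t ^ 2) * (1 + t) ≤ (a + b + c) * (1 + t) ^ 3 :=
    quad_mul_lin_le_cube a b c t ha hb hc ht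
  have h4 : ((a + b * t + c * t ^ 2) * Real.exp (2 * t - t ^ 2)) * (1 + t) ≤
      ((a + b + c) * (1 + t) ^ 3) * Real.exp (2 * t - t ^ 2) := by
    calc ((a + b * t + c * t ^ 2) * Real.exp (2 * t - t ^ 2)) * (1 + t)
        = ((a + b * t + c * t ^ 2) * (1 + t)) * Real.exp (2 * t - t ^ 2) := by ring
      _ ≤ ((a + b + c) * (1 + t) ^ 3) * Real.exp (2 * t - t ^ 2) :=
          mul_le_mul_of_nonneg_right h3 (Real.exp_pos _).le
  calc D * (P * e) * n = D * ((P * e) * n) := by ring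
    _ ≤ D * (((a + b + c) * (1 + t) ^ 3) * Real.exp (2 * t - t ^ 2)) :=
        mul_le_mul_of_nonneg_left (h2.trans h4) hD
    _ = _ := by ring

variable {d : ℕ} {L σ : ℝ} {f : EuclideanSpace ℝ (Fin d) → ℝ}

lemma grad_continuous (hL : 0 < L)
    (hgrad : ∀ x y, ‖gradient f x - gradient f y‖ ≤ L * ‖x - y‖) :
    Continuous (gradient f) := by
  refine LipschitzWith.continuous (K := Real.toNNReal L) ?_
  refine LipschitzWith.of_dist_le_mul fun x y => ?_
  rw [dist_eq_norm, dist_eq_norm, Real.coe_toNNReal L hL.le]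
  exact hgrad x y

lemma fderiv_continuous (hL : 0 < L)
    (hgrad : ∀ x y, ‖gradient f x - gradient f y‖ ≤ L * ‖x - y‖) :
    Continuous (fun z => fderiv ℝ f z) := by
  have : (fun z => fderiv ℝ f z) =
      fun z => InnerProductSpace.toDual ℝ (EuclideanSpace ℝ (Fin d)) (gradient f z) := by
    funext z; rw [gradient, LinearIsometryEquiv.apply_symm_apply]
  rw [this]
  exact (InnerProductSpace.toDual ℝ _).continuous.comp (grad_continuous hL hgrad)


variable (hL : 0 < L) (hσ : 0 < σ) (hdiff : Differentiable ℝ f)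
  (hgrad : ∀ x y, ‖gradient f x - gradient f y‖ ≤ L * ‖x - y‖)

include hL hσ hdiff hgrad

lemma integrand_integrable (x : EuclideanSpace ℝ (Fin d)) :
    Integrable (fun u : EuclideanSpace ℝ (Fin d) => f (x + σ • u) * Real.exp (-‖u‖ ^ 2)) := by
  have hfc : Continuous f := hdiff.continuous
  refine integrable_of_le_cube (Continuous.aestronglyMeasurable (by fun_prop))
    (|f x| + σ * (‖gradient f 0‖ + L * ‖x‖) + L * σ ^ 2) fun u => ?_
  have hfg := f_growth hdiff hgrad hL.le x (x + σ • u)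
  rw [add_sub_cancel_left, norm_smul, Real.norm_eq_abs, abs_of_pos hσ] at hfg
  rw [Real.norm_eq_abs, abs_mul, abs_of_pos (Real.exp_pos _)]
  have h2 : |f (x + σ • u)| ≤ |f x| + σ * (‖gradient f 0‖ + L * ‖x‖) * ‖u‖ +
      (L * σ ^ 2) * ‖u‖ ^ 2 := by nlinarith [norm_nonneg u]
  calc |f (x + σ • u)| * Real.exp (-‖u‖ ^ 2)
      ≤ (|f x| + σ * (‖gradient f 0‖ + L * ‖x‖) * ‖u‖ + (L * σ ^ 2) * ‖u‖ ^ 2) *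
          Real.exp (-‖u‖ ^ 2) := mul_le_mul_of_nonneg_right h2 (Real.exp_pos _).le
    _ ≤ _ := quad_le_cube _ _ _ _ (abs_nonneg _) (by positivity) (by positivity) (norm_nonneg u)

lemma intA (x : EuclideanSpace ℝ (Fin d)) :
    Integrable (fun u : EuclideanSpace ℝ (Fin d) =>
      Real.exp (-‖u‖ ^ 2) • fderiv ℝ f (x + σ • u)) := by
  refine integrable_of_le_cube (Continuous.aestronglyMeasurable
    ((Real.continuous_exp.comp (by fun_prop)).smul
      ((fderiv_continuous hL hgrad).comp (by fun_prop))))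
    (‖gradient f 0‖ + L * ‖x‖ + L * σ) fun u => ?_
  rw [norm_smul, Real.norm_eq_abs, abs_of_pos (Real.exp_pos _), norm_fderiv_eq]
  have hg := grad_norm_le hgrad (x + σ • u)
  have hnx : ‖x + σ • u‖ ≤ ‖x‖ + σ * ‖u‖ := by
    calc ‖x + σ • u‖ ≤ ‖x‖ + ‖σ • u‖ := norm_add_le _ _
      _ = ‖x‖ + σ * ‖u‖ := by rw [norm_smul, Real.norm_eq_abs, abs_of_pos hσ]
  have hg2 : ‖gradient f (x + σ • u)‖ ≤ (‖gradient f 0‖ + L * ‖x‖) + (L * σ) * ‖u‖ := by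
    have : L * ‖x + σ • u‖ ≤ L * (‖x‖ + σ * ‖u‖) := mul_le_mul_of_nonneg_left hnx hL.le
    nlinarith
  calc Real.exp (-‖u‖ ^ 2) * ‖gradient f (x + σ • u)‖
      ≤ Real.exp (-‖u‖ ^ 2) * ((‖gradient f 0‖ + L * ‖x‖) + (L * σ) * ‖u‖) :=
        mul_le_mul_of_nonneg_left hg2 (Real.exp_pos _).le
    _ = ((‖gradient f 0‖ + L * ‖x‖) + (L * σ) * ‖u‖) * Real.exp (-‖u‖ ^ 2) := by ring
    _ ≤ ((‖gradient f 0‖ + L * ‖x‖) + L * σ) *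
          ((1 + ‖u‖) ^ 3 * Real.exp (2 * ‖u‖ - ‖u‖ ^ 2)) :=
        linear_le_cube _ _ _ (by positivity) (by positivity) (norm_nonneg u)
    _ = _ := by ring_nf

lemma hasFDerivA (x₀ : EuclideanSpace ℝ (Fin d)) :
    HasFDerivAt (fun x => ∫ u : EuclideanSpace ℝ (Fin d), f (x + σ • u) * Real.exp (-‖u‖ ^ 2))
      (∫ u : EuclideanSpace ℝ (Fin d), Real.exp (-‖u‖ ^ 2) • fderiv ℝ f (x₀ + σ • u)) x₀ := by
  set G0 := ‖gradient f 0‖ with hG0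
  apply hasFDerivAt_integral_of_dominated_of_fderiv_le
    (F' := fun x u => Real.exp (-‖u‖ ^ 2) • fderiv ℝ f (x + σ • u))
    (bound := fun u => (G0 + L * ‖x₀‖ + L + L * σ) *
      ((1 + ‖u‖) ^ 3 * Real.exp (2 * ‖u‖ - ‖u‖ ^ 2)))
    (Metric.ball_mem_nhds x₀ one_pos)
  · have hfc : Continuous f := hdiff.continuous
    exact Filter.Eventually.of_forall fun x =>
      Continuous.aestronglyMeasurable (by fun_prop)
  · exact integrand_integrable hL hσ hdiff hgrad x₀
  · refine Continuous.aestronglyMeasurable ?_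
    exact (Real.continuous_exp.comp (by fun_prop)).smul
      ((fderiv_continuous hL hgrad).comp (by fun_prop))
  · refine Filter.Eventually.of_forall fun u => fun x hx => ?_
    have hns : ‖Real.exp (-‖u‖ ^ 2) • fderiv ℝ f (x + σ • u)‖ =
        Real.exp (-‖u‖ ^ 2) * ‖gradient f (x + σ • u)‖ := by
      rw [norm_smul, Real.norm_eq_abs, abs_of_pos (Real.exp_pos _), norm_fderiv_eq]
    rw [hns]
    have hg1 := grad_norm_le hgrad (x + σ • u)
    have hxx : ‖x‖ ≤ ‖x₀‖ + 1 := by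
      have := mem_ball_iff_norm.1 hx
      calc ‖x‖ = ‖x₀ + (x - x₀)‖ := by rw [add_sub_cancel]
        _ ≤ ‖x₀‖ + ‖x - x₀‖ := norm_add_le _ _
        _ ≤ ‖x₀‖ + 1 := by linarith
    have hnx : ‖x + σ • u‖ ≤ ‖x₀‖ + 1 + σ * ‖u‖ := by
      calc ‖x + σ • u‖ ≤ ‖x‖ + ‖σ • u‖ := norm_add_le _ _
        _ = ‖x‖ + σ * ‖u‖ := by rw [norm_smul, Real.norm_eq_abs, abs_of_pos hσ]
        _ ≤ ‖x₀‖ + 1 + σ * ‖u‖ := by linarith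
    have hg2 : ‖gradient f (x + σ • u)‖ ≤ (G0 + L * ‖x₀‖ + L) + (L * σ) * ‖u‖ := by
      have : L * ‖x + σ • u‖ ≤ L * (‖x₀‖ + 1 + σ * ‖u‖) := by
        apply mul_le_mul_of_nonneg_left hnx hL.le
      nlinarith
    calc Real.exp (-‖u‖ ^ 2) * ‖gradient f (x + σ • u)‖
        ≤ Real.exp (-‖u‖ ^ 2) * ((G0 + L * ‖x₀‖ + L) + (L * σ) * ‖u‖) := by
          apply mul_le_mul_of_nonneg_left hg2 (Real.exp_pos _).le
      _ = ((G0 + L * ‖x₀‖ + L) + (L * σ) * ‖u‖) * Real.exp (-‖u‖ ^ 2) := by ring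
      _ ≤ ((G0 + L * ‖x₀‖ + L) + L * σ) *
            ((1 + ‖u‖) ^ 3 * Real.exp (2 * ‖u‖ - ‖u‖ ^ 2)) := by
          apply linear_le_cube
          · positivity
          · positivity
          · exact norm_nonneg u
      _ = _ := by ring_nf
  · exact (integrable_cube_gauss.const_mul _)
  · refine Filter.Eventually.of_forall fun u => fun x hx => ?_
    have h1 : HasFDerivAt (fun x : EuclideanSpace ℝ (Fin d) => x + σ • u)
        (ContinuousLinearMap.id ℝ _) x := (hasFDerivAt_id x).add_const _
    have h2 := ((hdiff (x + σ • u)).hasFDerivAt).comp x h1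
    have h3 := h2.mul_const (Real.exp (-‖u‖ ^ 2))
    simpa [ContinuousLinearMap.comp_id] using h3

lemma intB (x : EuclideanSpace ℝ (Fin d)) :
    Integrable (fun u : EuclideanSpace ℝ (Fin d) =>
      ((2 / σ) * (f (x + σ • u) * Real.exp (-‖u‖ ^ 2))) • innerSL ℝ u) := by
  have hfc : Continuous f := hdiff.continuous
  refine integrable_of_le_cube (Continuous.aestronglyMeasurable
      ((by fun_prop : Continuous (fun u : EuclideanSpace ℝ (Fin d) =>
        (2 / σ) * (f (x + σ • u) * Real.exp (-‖u‖ ^ 2)))).smul (innerSL ℝ).continuous))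
    ((2 / σ) * (|f x| + σ * (‖gradient f 0‖ + L * ‖x‖) + L * σ ^ 2)) fun u => ?_
  have hfg := f_growth hdiff hgrad hL.le x (x + σ • u)
  rw [add_sub_cancel_left, norm_smul, Real.norm_eq_abs, abs_of_pos hσ] at hfg
  have hns := norm_smul ((2 / σ) * (f (x + σ • u) * Real.exp (-‖u‖ ^ 2))) (innerSL ℝ u)
  rw [hns, innerSL_apply_norm, Real.norm_eq_abs, abs_mul, abs_mul,
    abs_of_pos (by positivity : (0:ℝ) < 2 / σ), abs_of_pos (Real.exp_pos _)]
  have h2 : |f (x + σ • u)| ≤ |f x| + σ * (‖gradient f 0‖ + L * ‖x‖) * ‖u‖ +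
      (L * σ ^ 2) * ‖u‖ ^ 2 := by nlinarith [norm_nonneg u]
  have := prod_bound (D := 2 / σ) (abs_nonneg (f x)) (by positivity) (by positivity)
    (norm_nonneg u) (by positivity) h2 (abs_nonneg _)
    (Real.exp_le_exp.2 (show -‖u‖ ^ 2 ≤ 2 * ‖u‖ - ‖u‖ ^ 2 by nlinarith [norm_nonneg u])) (Real.exp_pos _).le
    (by linarith [norm_nonneg u]) (norm_nonneg u)
  calc 2 / σ * (|f (x + σ • u)| * Real.exp (-‖u‖ ^ 2)) * ‖u‖ ≤
      2 / σ * (|f x| + σ * (‖gradient f 0‖ + L * ‖x‖) + L * σ ^ 2) *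
        ((1 + ‖u‖) ^ 3 * Real.exp (2 * ‖u‖ - ‖u‖ ^ 2)) := this
    _ = _ := by ring

lemma intBu (x : EuclideanSpace ℝ (Fin d)) :
    Integrable (fun u : EuclideanSpace ℝ (Fin d) =>
      (f (x + σ • u) * Real.exp (-‖u‖ ^ 2)) • u) := by
  have hfc : Continuous f := hdiff.continuous
  refine integrable_of_le_cube (Continuous.aestronglyMeasurable (by fun_prop))
    (|f x| + σ * (‖gradient f 0‖ + L * ‖x‖) + L * σ ^ 2) fun u => ?_
  have hfg := f_growth hdiff hgrad hL.le x (x + σ • u)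
  rw [add_sub_cancel_left, norm_smul, Real.norm_eq_abs, abs_of_pos hσ] at hfg
  have hns := norm_smul (f (x + σ • u) * Real.exp (-‖u‖ ^ 2)) u
  rw [hns, Real.norm_eq_abs, abs_mul, abs_of_pos (Real.exp_pos _)]
  have h2 : |f (x + σ • u)| ≤ |f x| + σ * (‖gradient f 0‖ + L * ‖x‖) * ‖u‖ +
      (L * σ ^ 2) * ‖u‖ ^ 2 := by nlinarith [norm_nonneg u]
  have := prod_bound (D := 1) (abs_nonneg (f x)) (by positivity) (by positivity)
    (norm_nonneg u) one_pos.le h2 (abs_nonneg _)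
    (Real.exp_le_exp.2 (show -‖u‖ ^ 2 ≤ 2 * ‖u‖ - ‖u‖ ^ 2 by nlinarith [norm_nonneg u])) (Real.exp_pos _).le
    (by linarith [norm_nonneg u]) (norm_nonneg u)
  calc |f (x + σ • u)| * Real.exp (-‖u‖ ^ 2) * ‖u‖
      = 1 * (|f (x + σ • u)| * Real.exp (-‖u‖ ^ 2)) * ‖u‖ := by ring
    _ ≤ 1 * (|f x| + σ * (‖gradient f 0‖ + L * ‖x‖) + L * σ ^ 2) *
        ((1 + ‖u‖) ^ 3 * Real.exp (2 * ‖u‖ - ‖u‖ ^ 2)) := this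
    _ = _ := by ring

lemma hasFDerivB (x₀ : EuclideanSpace ℝ (Fin d)) :
    HasFDerivAt (fun x => ∫ u : EuclideanSpace ℝ (Fin d), f (x + σ • u) * Real.exp (-‖u‖ ^ 2))
      (∫ u : EuclideanSpace ℝ (Fin d),
        ((2 / σ) * (f (x₀ + σ • u) * Real.exp (-‖u‖ ^ 2))) • innerSL ℝ u) x₀ := by
  have hfc : Continuous f := hdiff.continuous
  have hG0 := grad_norm_le hgrad
  have hGH : (fun x => ∫ u : EuclideanSpace ℝ (Fin d), f (x + σ • u) * Real.exp (-‖u‖ ^ 2)) =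
      (fun x => ∫ u : EuclideanSpace ℝ (Fin d),
        f (x₀ + σ • u) * Real.exp (-‖u - σ⁻¹ • (x - x₀)‖ ^ 2)) := by
    funext x
    rw [← integral_add_right_eq_self
      (fun u : EuclideanSpace ℝ (Fin d) =>
        f (x₀ + σ • u) * Real.exp (-‖u - σ⁻¹ • (x - x₀)‖ ^ 2)) (σ⁻¹ • (x - x₀))]
    congr 1; funext u
    have h1 : x₀ + σ • (u + σ⁻¹ • (x - x₀)) = x + σ • u := by
      rw [smul_add, smul_inv_smul₀ hσ.ne']; abel
    rw [add_sub_cancel_right, h1]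
  rw [hGH]
  have hder := hasFDerivAt_integral_of_dominated_of_fderiv_le
    (μ := (volume : Measure (EuclideanSpace ℝ (Fin d))))
    (F := fun x u => f (x₀ + σ • u) * Real.exp (-‖u - σ⁻¹ • (x - x₀)‖ ^ 2))
    (F' := fun x u => ((2 / σ) * (f (x₀ + σ • u) * Real.exp (-‖u - σ⁻¹ • (x - x₀)‖ ^ 2))) •
        innerSL ℝ (u - σ⁻¹ • (x - x₀)))
    (bound := fun u => ((2 / σ) * (|f x₀| + σ * (‖gradient f 0‖ + L * ‖x₀‖) + L * σ ^ 2)) *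
      ((1 + ‖u‖) ^ 3 * Real.exp (2 * ‖u‖ - ‖u‖ ^ 2)))
    (x₀ := x₀) (Metric.ball_mem_nhds x₀ hσ)
    (Filter.Eventually.of_forall fun x => Continuous.aestronglyMeasurable (by fun_prop))
    (by
      have := integrand_integrable hL hσ hdiff hgrad x₀
      refine this.congr (Filter.Eventually.of_forall fun u => ?_)
      simp)
    (Continuous.aestronglyMeasurable (by
      refine Continuous.smul (by fun_prop : Continuous (fun u : EuclideanSpace ℝ (Fin d) =>
        (2 / σ) * (f (x₀ + σ • u) * Real.exp (-‖u - σ⁻¹ • (x₀ - x₀)‖ ^ 2)))) ?_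
      exact (innerSL ℝ).continuous.comp (by fun_prop)))
    (Filter.Eventually.of_forall fun u => fun x hx => ?_)
    ((integrable_cube_gauss.const_mul _))
    (Filter.Eventually.of_forall fun u => fun x hx => ?_)
  · simp only [sub_self, smul_zero, sub_zero] at hder
    exact hder
  · -- bound
    have hw : ‖σ⁻¹ • (x - x₀)‖ ≤ 1 := by
      rw [norm_smul, Real.norm_eq_abs, abs_of_pos (inv_pos.2 hσ)]
      have := mem_ball_iff_norm.1 hx
      rw [inv_mul_le_iff₀ hσ]
      linarith
    have hfg := f_growth hdiff hgrad hL.le x₀ (x₀ + σ • u)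
    rw [add_sub_cancel_left, norm_smul, Real.norm_eq_abs, abs_of_pos hσ] at hfg
    have h2 : |f (x₀ + σ • u)| ≤ |f x₀| + σ * (‖gradient f 0‖ + L * ‖x₀‖) * ‖u‖ +
        (L * σ ^ 2) * ‖u‖ ^ 2 := by nlinarith [norm_nonneg u]
    show ‖((2 / σ) * (f (x₀ + σ • u) * Real.exp (-‖u - σ⁻¹ • (x - x₀)‖ ^ 2))) •
        innerSL ℝ (u - σ⁻¹ • (x - x₀))‖ ≤ _
    have hns := norm_smul ((2 / σ) * (f (x₀ + σ • u) * Real.exp (-‖u - σ⁻¹ • (x - x₀)‖ ^ 2)))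
      (innerSL ℝ (u - σ⁻¹ • (x - x₀)))
    rw [hns, innerSL_apply_norm, Real.norm_eq_abs, abs_mul, abs_mul,
      abs_of_pos (by positivity : (0:ℝ) < 2 / σ), abs_of_pos (Real.exp_pos _)]
    have hsub : ‖u - σ⁻¹ • (x - x₀)‖ ≤ 1 + ‖u‖ := by
      calc ‖u - σ⁻¹ • (x - x₀)‖ ≤ ‖u‖ + ‖σ⁻¹ • (x - x₀)‖ := norm_sub_le _ _
        _ ≤ 1 + ‖u‖ := by linarith
    have := prod_bound (D := 2 / σ) (abs_nonneg (f x₀)) (by positivity) (by positivity)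
      (norm_nonneg u) (by positivity) h2 (abs_nonneg _)
      (exp_shift_le hw) (Real.exp_pos _).le hsub (norm_nonneg _)
    calc 2 / σ * (|f (x₀ + σ • u)| * Real.exp (-‖u - σ⁻¹ • (x - x₀)‖ ^ 2)) *
          ‖u - σ⁻¹ • (x - x₀)‖ ≤
        2 / σ * (|f x₀| + σ * (‖gradient f 0‖ + L * ‖x₀‖) + L * σ ^ 2) *
          ((1 + ‖u‖) ^ 3 * Real.exp (2 * ‖u‖ - ‖u‖ ^ 2)) := this
      _ = _ := by ring
  · -- differentiability in x
    have h1 : HasFDerivAt (fun x : EuclideanSpace ℝ (Fin d) => u - σ⁻¹ • (x - x₀))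
        (-(σ⁻¹ • ContinuousLinearMap.id ℝ (EuclideanSpace ℝ (Fin d)))) x := by
      exact (((hasFDerivAt_id x).sub_const x₀).const_smul σ⁻¹).const_sub u
    have h2 := h1.inner ℝ h1
    have h4 := (Real.hasDerivAt_exp
      (-(inner ℝ (u - σ⁻¹ • (x - x₀)) (u - σ⁻¹ • (x - x₀)) : ℝ))).comp_hasFDerivAt x h2.neg
    have h5 := h4.const_mul (f (x₀ + σ • u))
    simp only [Function.comp_def, real_inner_self_eq_norm_sq] at h5
    refine h5.congr_fderiv ?_
    ext h
    simp only [ContinuousLinearMap.smul_apply, ContinuousLinearMap.comp_apply,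
      ContinuousLinearMap.prod_apply, ContinuousLinearMap.neg_apply,
      ContinuousLinearMap.coe_id', id_eq, fderivInnerCLM_apply, innerSL_apply_apply,
      inner_neg_left, inner_neg_right, real_inner_smul_left, real_inner_smul_right,
      smul_eq_mul]
    rw [real_inner_comm]
    ring

end GsmoothAux




/-- If `f` is `L`-smooth and bounded below, then `f_σ` is differentiable and
its partial derivatives are given both by smoothing `∂f/∂x_i` and by the formula
`∇f_σ(x) = (2/(σ π^(d/2))) ∫ u f(x + σu) e^(−‖u‖²) du`. -/
theorem gsmooth_gradient_formula {d : ℕ} (hd : 1 ≤ d) {L σ : ℝ} (hL : 0 < L) (hσ : 0 < σ)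
    (f : EuclideanSpace ℝ (Fin d) → ℝ)
    (hdiff : Differentiable ℝ f)
    (hgrad : ∀ x y, ‖gradient f x - gradient f y‖ ≤ L * ‖x - y‖)
    (hbdd : BddBelow (Set.range f)) :
    Differentiable ℝ (gsmooth f σ) ∧
    (∀ x, ∀ i : Fin d,
      gradient (gsmooth f σ) x i =
        Real.pi ^ (-(d : ℝ) / 2) *
          ∫ u : EuclideanSpace ℝ (Fin d), gradient f (x + σ • u) i * Real.exp (-‖u‖ ^ 2) ∧
      gradient (gsmooth f σ) x i =
        2 / (σ * Real.pi ^ ((d : ℝ) / 2)) *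
          ∫ u : EuclideanSpace ℝ (Fin d), u i * f (x + σ • u) * Real.exp (-‖u‖ ^ 2)) ∧
    (∀ x, gradient (gsmooth f σ) x =
      (2 / (σ * Real.pi ^ ((d : ℝ) / 2))) •
        ∫ u : EuclideanSpace ℝ (Fin d), (f (x + σ • u) * Real.exp (-‖u‖ ^ 2)) • u) := by
  classical
  have hσ0 : σ ≠ 0 := hσ.ne'
  set c0 : ℝ := Real.pi ^ (-(d : ℝ) / 2) with hc0
  have hgs : gsmooth f σ =
      fun x => c0 * ∫ u : EuclideanSpace ℝ (Fin d), f (x + σ • u) * Real.exp (-‖u‖ ^ 2) := by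
    funext x; rw [gsmooth, if_neg hσ0]
  have hDA : ∀ x, HasFDerivAt (gsmooth f σ)
      (c0 • (∫ u : EuclideanSpace ℝ (Fin d),
        Real.exp (-‖u‖ ^ 2) • fderiv ℝ f (x + σ • u))) x := by
    intro x; rw [hgs]
    exact (GsmoothAux.hasFDerivA hL hσ hdiff hgrad x).const_mul c0
  have hDB : ∀ x, HasFDerivAt (gsmooth f σ)
      (c0 • (∫ u : EuclideanSpace ℝ (Fin d),
        ((2 / σ) * (f (x + σ • u) * Real.exp (-‖u‖ ^ 2))) • innerSL ℝ u)) x := by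
    intro x; rw [hgs]
    exact (GsmoothAux.hasFDerivB hL hσ hdiff hgrad x).const_mul c0
  have hdiffg : Differentiable ℝ (gsmooth f σ) := fun x => (hDA x).differentiableAt
  have hgradA : ∀ x, gradient (gsmooth f σ) x =
      (InnerProductSpace.toDual ℝ (EuclideanSpace ℝ (Fin d))).symm
        (c0 • (∫ u : EuclideanSpace ℝ (Fin d),
          Real.exp (-‖u‖ ^ 2) • fderiv ℝ f (x + σ • u))) := by
    intro x; rw [gradient, (hDA x).fderiv]
  have hgradB : ∀ x, gradient (gsmooth f σ) x =
      (InnerProductSpace.toDual ℝ (EuclideanSpace ℝ (Fin d))).symm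
        (c0 • (∫ u : EuclideanSpace ℝ (Fin d),
          ((2 / σ) * (f (x + σ • u) * Real.exp (-‖u‖ ^ 2))) • innerSL ℝ u)) := by
    intro x; rw [gradient, (hDB x).fderiv]
  have hpi : (0:ℝ) < Real.pi ^ ((d : ℝ) / 2) := Real.rpow_pos_of_pos Real.pi_pos _
  have hcc : c0 * (2 / σ) = 2 / (σ * Real.pi ^ ((d : ℝ) / 2)) := by
    rw [hc0, neg_div, Real.rpow_neg Real.pi_pos.le]
    field_simp
  refine ⟨hdiffg, ?_, ?_⟩
  · intro x i
    have h1 : ∀ v : EuclideanSpace ℝ (Fin d), v i =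
        inner (𝕜 := ℝ) v (EuclideanSpace.single i (1:ℝ)) := by
      intro v; rw [EuclideanSpace.inner_single_right]; simp
    constructor
    · rw [h1 (gradient (gsmooth f σ) x), hgradA x, InnerProductSpace.toDual_symm_apply, ContinuousLinearMap.smul_apply,
        ContinuousLinearMap.integral_apply (GsmoothAux.intA hL hσ hdiff hgrad x), smul_eq_mul]
      congr 1
      congr 1
      funext u
      rw [ContinuousLinearMap.smul_apply, smul_eq_mul, GsmoothAux.fderiv_eq_toDual_gradient,
        InnerProductSpace.toDual_apply_apply, EuclideanSpace.inner_single_right]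
      simp [mul_comm]
    · rw [h1 (gradient (gsmooth f σ) x), hgradB x, InnerProductSpace.toDual_symm_apply, ContinuousLinearMap.smul_apply,
        ContinuousLinearMap.integral_apply (GsmoothAux.intB hL hσ hdiff hgrad x), smul_eq_mul]
      have e1 : ∀ u : EuclideanSpace ℝ (Fin d),
          ((((2 / σ) * (f (x + σ • u) * Real.exp (-‖u‖ ^ 2))) • innerSL ℝ u)
            (EuclideanSpace.single i (1:ℝ))) =
          (2 / σ) * (u i * f (x + σ • u) * Real.exp (-‖u‖ ^ 2)) := by
        intro u
        rw [ContinuousLinearMap.smul_apply, smul_eq_mul, innerSL_apply_apply,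
          EuclideanSpace.inner_single_right]
        simp
        ring
      rw [show (∫ u : EuclideanSpace ℝ (Fin d),
          ((((2 / σ) * (f (x + σ • u) * Real.exp (-‖u‖ ^ 2))) • innerSL ℝ u)
            (EuclideanSpace.single i (1:ℝ)))) =
          ∫ u : EuclideanSpace ℝ (Fin d),
            (2 / σ) * (u i * f (x + σ • u) * Real.exp (-‖u‖ ^ 2)) from by
        congr 1; funext u; exact e1 u]
      rw [MeasureTheory.integral_const_mul, ← mul_assoc, hcc]
  · intro x
    rw [hgradB x, LinearIsometryEquiv.map_smul]
    have h2 : (InnerProductSpace.toDual ℝ (EuclideanSpace ℝ (Fin d))).symm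
        (∫ u : EuclideanSpace ℝ (Fin d),
          ((2 / σ) * (f (x + σ • u) * Real.exp (-‖u‖ ^ 2))) • innerSL ℝ u) =
        ∫ u : EuclideanSpace ℝ (Fin d),
          (InnerProductSpace.toDual ℝ (EuclideanSpace ℝ (Fin d))).symm
            (((2 / σ) * (f (x + σ • u) * Real.exp (-‖u‖ ^ 2))) • innerSL ℝ u) :=
      ((InnerProductSpace.toDual ℝ (EuclideanSpace ℝ (Fin d))).symm.toLinearIsometry.integral_comp_comm
        (fun u : EuclideanSpace ℝ (Fin d) =>
          ((2 / σ) * (f (x + σ • u) * Real.exp (-‖u‖ ^ 2))) • innerSL ℝ u)).symm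
    rw [h2]
    have h3 : ∀ u : EuclideanSpace ℝ (Fin d),
        (InnerProductSpace.toDual ℝ (EuclideanSpace ℝ (Fin d))).symm
          (((2 / σ) * (f (x + σ • u) * Real.exp (-‖u‖ ^ 2))) • innerSL ℝ u) =
        (2 / σ) • ((f (x + σ • u) * Real.exp (-‖u‖ ^ 2)) • u) := by
      intro u
      rw [_root_.map_smul]
      have h5 : InnerProductSpace.toDual ℝ (EuclideanSpace ℝ (Fin d)) u = innerSL ℝ u := by
        ext y
        simp [InnerProductSpace.toDual_apply_apply]
      rw [← h5, LinearIsometryEquiv.symm_apply_apply, mul_smul]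
    rw [show (∫ u : EuclideanSpace ℝ (Fin d),
        (InnerProductSpace.toDual ℝ (EuclideanSpace ℝ (Fin d))).symm
          (((2 / σ) * (f (x + σ • u) * Real.exp (-‖u‖ ^ 2))) • innerSL ℝ u)) =
        ∫ u : EuclideanSpace ℝ (Fin d),
          (2 / σ) • ((f (x + σ • u) * Real.exp (-‖u‖ ^ 2)) • u) from by
      congr 1; funext u; exact h3 u]
    rw [integral_smul, smul_smul, hcc]
end

section
/- Let d ≥ 1, L > 0, σ > 0, and let f : ℝ^d → ℝ be L-smooth and attain a minimum at some x⋆ ∈ ℝ^d. Let ε ≥ 4σ²Ld/3. Then for every x ∈ f⋆(σ²Ld/4) and every y ∉ f⋆(ε), one has f_σ(x) < f_σ(y). -/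
open MeasureTheory
open scoped Classical

section GSAux

open Real

lemma GS.rpow_two_eq (x : ℝ) : x ^ (2:ℝ) = x ^ 2 := by
  rw [show ((2:ℝ)) = ((2:ℕ):ℝ) by norm_num, Real.rpow_natCast]

lemma GS.oneDimInt : Integrable (fun x : ℝ => x^2 * Real.exp (-x^2)) := by
  have h := integrable_rpow_mul_exp_neg_mul_sq (b := 1) one_pos (s := 2) (by norm_num)
  simpa [GS.rpow_two_eq, neg_one_mul] using h

lemma GS.oneDimIntExp : Integrable (fun x : ℝ => Real.exp (-x^2)) := by
  simpa [neg_one_mul] using integrable_exp_neg_mul_sq (b := 1) one_pos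

lemma GS.oneDimVal : ∫ x : ℝ, x^2 * Real.exp (-x^2) = Real.sqrt π / 2 := by
  have hIoi : ∫ x in Set.Ioi (0:ℝ), x^2 * Real.exp (-x^2) = Real.sqrt π / 4 := by
    have h := integral_rpow_mul_exp_neg_rpow (p := 2) (q := 2) two_pos (by norm_num)
    rw [show ((2:ℝ)+1)/2 = 1/2 + 1 by norm_num, Real.Gamma_add_one (by norm_num),
      Real.Gamma_one_half_eq] at h
    simp only [GS.rpow_two_eq] at h
    rw [h]; ring
  have hIic : ∫ x in Set.Iic (0:ℝ), x^2 * Real.exp (-x^2) = Real.sqrt π / 4 := by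
    have : ∫ x in Set.Iic (0:ℝ), x^2 * Real.exp (-x^2)
        = ∫ x in Set.Iic (0:ℝ), (-x)^2 * Real.exp (-(-x)^2) := by
      refine setIntegral_congr_fun measurableSet_Iic (fun x _ => ?_); ring_nf
    rw [this, integral_comp_neg_Iic 0 (fun x => x^2 * Real.exp (-x^2)), neg_zero, hIoi]
  have := intervalIntegral.integral_Iic_add_Ioi (b := (0:ℝ)) (μ := volume)
    GS.oneDimInt.integrableOn GS.oneDimInt.integrableOn
  rw [← this, hIic, hIoi]; ring

lemma GS.oneDimValExp : ∫ x : ℝ, Real.exp (-x^2) = Real.sqrt π := by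
  simpa [neg_one_mul, div_one] using integral_gaussian 1

noncomputable def GS.gij {d : ℕ} (i j : Fin d) : ℝ → ℝ :=
  if j = i then fun x => x^2 * Real.exp (-x^2) else fun x => Real.exp (-x^2)

lemma GS.normsq_symm {d : ℕ} (v : Fin d → ℝ) :
    ‖(MeasurableEquiv.toLp 2 (Fin d → ℝ)).symm.symm v‖ ^ 2 = ∑ i, v i ^ 2 := by
  simp only [MeasurableEquiv.symm_symm, MeasurableEquiv.coe_toLp,
    EuclideanSpace.norm_eq, PiLp.toLp_apply, Real.norm_eq_abs, sq_abs]
  rw [Real.sq_sqrt]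
  exact Finset.sum_nonneg fun i _ => by positivity

lemma GS.exp_neg_sum {d : ℕ} (v : Fin d → ℝ) :
    Real.exp (-(∑ i, v i ^ 2)) = ∏ j, Real.exp (-(v j)^2) := by
  rw [← Real.exp_sum]
  congr 1
  rw [← Finset.sum_neg_distrib]

lemma GS.J0 {d : ℕ} : Integrable (fun u : EuclideanSpace ℝ (Fin d) => Real.exp (-‖u‖^2)) := by
  have hpre := EuclideanSpace.volume_preserving_symm_measurableEquiv_toLp (Fin d)
  rw [← MeasurePreserving.integrable_comp_emb hpre.symm (MeasurableEquiv.measurableEmbedding _)]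
  have : ((fun u : EuclideanSpace ℝ (Fin d) => Real.exp (-‖u‖^2)) ∘
      (MeasurableEquiv.toLp 2 (Fin d → ℝ)).symm.symm)
      = fun v : Fin d → ℝ => ∏ i, Real.exp (-(v i)^2) := by
    funext v
    rw [Function.comp_apply, GS.normsq_symm v, GS.exp_neg_sum]
  rw [this]
  exact Integrable.fintype_prod (f := fun _ x => Real.exp (-x^2)) fun i => GS.oneDimIntExp

lemma GS.prod_fun_eq {d : ℕ} (i : Fin d) (v : Fin d → ℝ) :
    (v i)^2 * ∏ j, Real.exp (-(v j)^2) = ∏ j, GS.gij i j (v j) := by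
  rw [← Finset.mul_prod_erase Finset.univ (fun j => GS.gij i j (v j)) (Finset.mem_univ i)]
  rw [← Finset.mul_prod_erase Finset.univ (fun j => Real.exp (-(v j)^2)) (Finset.mem_univ i)]
  rw [← mul_assoc]
  congr 1
  · simp [GS.gij]
  · refine Finset.prod_congr rfl fun j hj => ?_
    simp only [GS.gij, if_neg (Finset.mem_erase.mp hj).1]

lemma GS.comp_eq_sum {d : ℕ} :
    ((fun u : EuclideanSpace ℝ (Fin d) => ‖u‖^2 * Real.exp (-‖u‖^2)) ∘
      (MeasurableEquiv.toLp 2 (Fin d → ℝ)).symm.symm)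
      = fun v : Fin d → ℝ => ∑ i, ∏ j, GS.gij i j (v j) := by
  funext v
  rw [Function.comp_apply, GS.normsq_symm v, GS.exp_neg_sum, Finset.sum_mul]
  exact Finset.sum_congr rfl fun i _ => GS.prod_fun_eq i v

lemma GS.gijInt {d : ℕ} (i j : Fin d) : Integrable (GS.gij i j) := by
  by_cases h : j = i <;> simp [GS.gij, h, GS.oneDimInt, GS.oneDimIntExp]

lemma GS.J2 {d : ℕ} :
    Integrable (fun u : EuclideanSpace ℝ (Fin d) => ‖u‖^2 * Real.exp (-‖u‖^2)) := by
  have hpre := EuclideanSpace.volume_preserving_symm_measurableEquiv_toLp (Fin d)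
  rw [← MeasurePreserving.integrable_comp_emb hpre.symm (MeasurableEquiv.measurableEmbedding _),
    GS.comp_eq_sum]
  exact integrable_finset_sum _ fun i _ => Integrable.fintype_prod (f := GS.gij i) (GS.gijInt i)

lemma GS.I2 {d : ℕ} (hd : 1 ≤ d) :
    ∫ u : EuclideanSpace ℝ (Fin d), ‖u‖^2 * Real.exp (-‖u‖^2)
      = d * Real.sqrt π ^ d / 2 := by
  have hpre := (EuclideanSpace.volume_preserving_symm_measurableEquiv_toLp (Fin d)).symm
  rw [← hpre.integral_comp (MeasurableEquiv.measurableEmbedding _)]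
  simp only [GS.normsq_symm, GS.exp_neg_sum, Finset.sum_mul]
  simp only [GS.prod_fun_eq]
  rw [integral_finset_sum (μ := volume) (f := fun i (v : Fin d → ℝ) => ∏ j, GS.gij i j (v j)) _
    fun i _ => Integrable.fintype_prod (f := GS.gij i) (GS.gijInt i)]
  have hone : ∀ i : Fin d, ∫ v : Fin d → ℝ, ∏ j, GS.gij i j (v j)
      = Real.sqrt π / 2 * Real.sqrt π ^ (d - 1) := by
    intro i
    rw [integral_fintype_prod_volume_eq_prod (ι := Fin d) (fun j => GS.gij i j)]
    rw [← Finset.mul_prod_erase Finset.univ _ (Finset.mem_univ i)]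
    have h1 : ∫ x, GS.gij i i x = Real.sqrt π / 2 := by simp [GS.gij, GS.oneDimVal]
    have h2 : ∀ j ∈ Finset.univ.erase i, (∫ x, GS.gij i j x) = Real.sqrt π := by
      intro j hj
      simp only [GS.gij, if_neg (Finset.mem_erase.mp hj).1, GS.oneDimValExp]
    rw [h1, Finset.prod_congr rfl h2, Finset.prod_const, Finset.card_erase_of_mem
      (Finset.mem_univ i), Finset.card_univ, Fintype.card_fin]
  rw [Finset.sum_congr rfl fun i _ => hone i, Finset.sum_const, Finset.card_univ,
    Fintype.card_fin, nsmul_eq_mul]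
  rw [show Real.sqrt π ^ d = Real.sqrt π * Real.sqrt π ^ (d - 1) by
    rw [← pow_succ']
    congr 1
    omega]
  ring

lemma GS.I1 {d : ℕ} (c : EuclideanSpace ℝ (Fin d)) :
    ∫ u : EuclideanSpace ℝ (Fin d), (inner ℝ c u : ℝ) * Real.exp (-‖u‖^2) = 0 := by
  have h := integral_neg_eq_self
    (fun u : EuclideanSpace ℝ (Fin d) => (inner ℝ c u : ℝ) * Real.exp (-‖u‖^2)) volume
  simp only [inner_neg_right, norm_neg, neg_mul] at h
  rw [integral_neg] at h
  linarith

lemma GS.I0 {d : ℕ} :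
    ∫ v : EuclideanSpace ℝ (Fin d), Real.exp (-‖v‖^2) = Real.sqrt π ^ d := by
  have h := GaussianFourier.integral_rexp_neg_mul_sq_norm (V := EuclideanSpace ℝ (Fin d)) one_pos
  simp only [neg_one_mul, finrank_euclideanSpace_fin, div_one] at h
  rw [h, ← Real.rpow_natCast (Real.sqrt π) d, Real.sqrt_eq_rpow, ← Real.rpow_mul pi_pos.le]
  norm_num
  ring_nf

lemma GS.fderiv_eq_inner {d : ℕ} (f : EuclideanSpace ℝ (Fin d) → ℝ)
    (hdiff : Differentiable ℝ f) (y w : EuclideanSpace ℝ (Fin d)) :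
    fderiv ℝ f y w = (inner ℝ (gradient f y) w : ℝ) := by
  have h := (hdiff y).hasGradientAt.hasFDerivAt.fderiv
  rw [h, InnerProductSpace.toDual_apply_apply]

lemma GS.taylor_bound {d : ℕ} {L : ℝ} (hL : 0 ≤ L) (f : EuclideanSpace ℝ (Fin d) → ℝ)
    (hdiff : Differentiable ℝ f)
    (hgrad : ∀ x y, ‖gradient f x - gradient f y‖ ≤ L * ‖x - y‖)
    (a v : EuclideanSpace ℝ (Fin d)) :
    |f (a + v) - f a - (inner ℝ (gradient f a) v : ℝ)| ≤ L * ‖v‖^2 := by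
  set c : ℝ := (inner ℝ (gradient f a) v : ℝ) with hc
  set g : ℝ → ℝ := fun t => f (a + t • v) - t * c with hg
  have hderiv : ∀ t : ℝ, HasDerivAt g
      ((inner ℝ (gradient f (a + t • v)) v : ℝ) - c) t := by
    intro t
    have h1 : HasDerivAt (fun t : ℝ => a + t • v) v t := by
      simpa using ((hasDerivAt_id t).smul_const v).const_add a
    have h2 : HasDerivAt (fun t : ℝ => f (a + t • v)) (fderiv ℝ f (a + t • v) v) t :=
      (hdiff _).hasFDerivAt.comp_hasDerivAt t h1
    rw [GS.fderiv_eq_inner f hdiff] at h2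
    exact h2.sub (hasDerivAt_mul_const c)
  have key : ‖g 1 - g 0‖ ≤ (L * ‖v‖^2) * ‖(1:ℝ) - 0‖ := by
    refine (convex_Icc (0:ℝ) 1).norm_image_sub_le_of_norm_hasDerivWithin_le
      (fun t ht => (hderiv t).hasDerivWithinAt) (fun t ht => ?_)
      (Set.left_mem_Icc.mpr zero_le_one) (Set.right_mem_Icc.mpr zero_le_one)
    rw [hc, ← inner_sub_left]
    calc ‖(inner ℝ (gradient f (a + t • v) - gradient f a) v : ℝ)‖
        ≤ ‖gradient f (a + t • v) - gradient f a‖ * ‖v‖ := norm_inner_le_norm _ _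
      _ ≤ (L * ‖a + t • v - a‖) * ‖v‖ := by gcongr; exact hgrad _ _
      _ ≤ L * ‖v‖^2 := by
          simp only [add_sub_cancel_left, norm_smul, Real.norm_eq_abs]
          rw [abs_of_nonneg ht.1]
          nlinarith [mul_nonneg (mul_nonneg hL (sub_nonneg.mpr ht.2))
            (mul_nonneg (norm_nonneg v) (norm_nonneg v))]
  have e1 : g 1 - g 0 = f (a + v) - f a - c := by
    rw [hg]; simp; ring
  rw [e1, Real.norm_eq_abs] at key
  simpa using key

end GSAux

open Real in
lemma GS.gsmooth_close {d : ℕ} (hd : 1 ≤ d) {L σ : ℝ} (hL : 0 < L) (hσ : 0 < σ)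
    (f : EuclideanSpace ℝ (Fin d) → ℝ) (hdiff : Differentiable ℝ f)
    (hgrad : ∀ x y, ‖gradient f x - gradient f y‖ ≤ L * ‖x - y‖)
    (x : EuclideanSpace ℝ (Fin d)) :
    |gsmooth f σ x - f x| ≤ L * σ^2 * d / 2 := by
  set P : ℝ := Real.sqrt π ^ d with hPdef
  have hP : 0 < P := pow_pos (Real.sqrt_pos.mpr pi_pos) d
  set c : EuclideanSpace ℝ (Fin d) → ℝ := fun u => (inner ℝ (gradient f x) u : ℝ) with hcdef
  set φ : EuclideanSpace ℝ (Fin d) → ℝ :=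
    fun u => (f (x + σ • u) - f x - σ * c u) * Real.exp (-‖u‖^2) with hφ
  have hcont : Continuous φ := by
    refine Continuous.mul (Continuous.sub (Continuous.sub ?_ continuous_const) ?_) ?_
    · exact hdiff.continuous.comp (continuous_const.add (continuous_id.const_smul σ))
    · exact continuous_const.mul (Continuous.inner continuous_const continuous_id)
    · exact Real.continuous_exp.comp (continuous_norm.pow 2).neg
  have hφbound : ∀ u, |φ u| ≤ L * σ^2 * (‖u‖^2 * Real.exp (-‖u‖^2)) := by
    intro u
    have ht := GS.taylor_bound hL.le f hdiff hgrad x (σ • u)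
    rw [real_inner_smul_right] at ht
    have hns : ‖σ • u‖^2 = σ^2 * ‖u‖^2 := by
      rw [norm_smul, Real.norm_eq_abs, mul_pow, sq_abs]
    rw [hns] at ht
    rw [hφ, abs_mul, Real.abs_exp]
    calc |f (x + σ • u) - f x - σ * c u| * Real.exp (-‖u‖^2)
        ≤ (L * (σ^2 * ‖u‖^2)) * Real.exp (-‖u‖^2) :=
          mul_le_mul_of_nonneg_right ht (Real.exp_pos _).le
      _ = L * σ^2 * (‖u‖^2 * Real.exp (-‖u‖^2)) := by ring
  have Jφ : Integrable φ := by
    refine Integrable.mono' (GS.J2.const_mul (L * σ^2)) hcont.aestronglyMeasurable ?_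
    filter_upwards with u
    rw [Real.norm_eq_abs]
    exact hφbound u
  have Jc : Integrable (fun u : EuclideanSpace ℝ (Fin d) => f x * Real.exp (-‖u‖^2)) :=
    GS.J0.const_mul _
  have Jl : Integrable (fun u : EuclideanSpace ℝ (Fin d) => σ * c u * Real.exp (-‖u‖^2)) := by
    have hb : Integrable (fun u : EuclideanSpace ℝ (Fin d) =>
        |σ| * ‖gradient f x‖ * Real.exp (-‖u‖^2)
        + |σ| * ‖gradient f x‖ * (‖u‖^2 * Real.exp (-‖u‖^2))) :=
      (GS.J0.const_mul _).add (GS.J2.const_mul _)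
    refine hb.mono' ?_ ?_
    · exact ((continuous_const.mul
        (Continuous.inner continuous_const continuous_id)).mul
        (Real.continuous_exp.comp (continuous_norm.pow 2).neg)).aestronglyMeasurable
    · filter_upwards with u
      rw [Real.norm_eq_abs, abs_mul, abs_mul, Real.abs_exp]
      have h1 : |c u| ≤ ‖gradient f x‖ * ‖u‖ := abs_real_inner_le_norm _ _
      have h2 : ‖u‖ ≤ 1 + ‖u‖^2 := by nlinarith [norm_nonneg u, sq_nonneg (‖u‖ - 1)]
      have he : (0:ℝ) < Real.exp (-‖u‖^2) := Real.exp_pos _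
      calc |σ| * |c u| * Real.exp (-‖u‖^2)
          ≤ |σ| * (‖gradient f x‖ * (1 + ‖u‖^2)) * Real.exp (-‖u‖^2) := by
            refine mul_le_mul_of_nonneg_right (mul_le_mul_of_nonneg_left
              (h1.trans (mul_le_mul_of_nonneg_left h2 (norm_nonneg _)))
              (abs_nonneg σ)) (Real.exp_pos _).le
        _ = |σ| * ‖gradient f x‖ * Real.exp (-‖u‖^2)
            + |σ| * ‖gradient f x‖ * (‖u‖^2 * Real.exp (-‖u‖^2)) := by ring
  have hdecomp : (fun u : EuclideanSpace ℝ (Fin d) => f (x + σ • u) * Real.exp (-‖u‖^2))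
      = fun u => φ u + (f x * Real.exp (-‖u‖^2) + σ * c u * Real.exp (-‖u‖^2)) := by
    funext u; rw [hφ]; ring
  have hI : ∫ u : EuclideanSpace ℝ (Fin d), f (x + σ • u) * Real.exp (-‖u‖^2)
      = (∫ u, φ u) + f x * P := by
    have Jsum : Integrable (fun u : EuclideanSpace ℝ (Fin d) =>
        f x * Real.exp (-‖u‖^2) + σ * c u * Real.exp (-‖u‖^2)) := Jc.add Jl
    rw [hdecomp, integral_add Jφ Jsum, integral_add Jc Jl]
    have e2 : ∫ u : EuclideanSpace ℝ (Fin d), f x * Real.exp (-‖u‖^2) = f x * P := by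
      rw [MeasureTheory.integral_const_mul, GS.I0]
    have e3 : ∫ u : EuclideanSpace ℝ (Fin d), σ * c u * Real.exp (-‖u‖^2) = 0 := by
      have : (fun u : EuclideanSpace ℝ (Fin d) => σ * c u * Real.exp (-‖u‖^2))
          = fun u => σ * (c u * Real.exp (-‖u‖^2)) := by funext u; ring
      rw [this, MeasureTheory.integral_const_mul, GS.I1, mul_zero]
    rw [e2, e3, add_zero]
  have hpi : (π : ℝ) ^ (-(d:ℝ)/2) = P⁻¹ := by
    rw [hPdef, ← Real.rpow_natCast (Real.sqrt π) d, Real.sqrt_eq_rpow,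
      ← Real.rpow_mul pi_pos.le, ← Real.rpow_neg pi_pos.le]
    congr 1; ring
  have hgs : gsmooth f σ x - f x = P⁻¹ * ∫ u, φ u := by
    rw [gsmooth, if_neg hσ.ne', hI, hpi]
    field_simp
    ring
  have hint : |∫ u, φ u| ≤ L * σ^2 * ((d : ℝ) * P / 2) := by
    have hb := norm_integral_le_of_norm_le (GS.J2.const_mul (L * σ^2))
      (Filter.Eventually.of_forall fun u => by
        rw [Real.norm_eq_abs]; exact hφbound u)
    rw [MeasureTheory.integral_const_mul, GS.I2 hd] at hb
    simpa [Real.norm_eq_abs] using hb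
  rw [hgs, abs_mul, abs_of_pos (inv_pos.mpr hP)]
  calc P⁻¹ * |∫ u, φ u| ≤ P⁻¹ * (L * σ^2 * ((d : ℝ) * P / 2)) := by gcongr
    _ = L * σ^2 * d / 2 := by field_simp

/-- For `ε ≥ 4σ²Ld/3`, every `x ∈ f⋆(σ²Ld/4)` and `y ∉ f⋆(ε)` satisfy
`f_σ(x) < f_σ(y)`. -/
theorem gsmooth_sublevel_strict_lt {d : ℕ} (hd : 1 ≤ d) {L σ ε : ℝ} (hL : 0 < L)
    (hσ : 0 < σ)
    (f : EuclideanSpace ℝ (Fin d) → ℝ)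
    (hdiff : Differentiable ℝ f)
    (hgrad : ∀ x y, ‖gradient f x - gradient f y‖ ≤ L * ‖x - y‖)
    (xstar : EuclideanSpace ℝ (Fin d)) (hmin : ∀ y, f xstar ≤ f y)
    (hε : 4 * σ ^ 2 * L * d / 3 ≤ ε) :
    ∀ x y : EuclideanSpace ℝ (Fin d),
      f x - f xstar ≤ σ ^ 2 * L * d / 4 → ¬ (f y - f xstar ≤ ε) →
      gsmooth f σ x < gsmooth f σ y := by
  intro x y hx hy
  have hbx := GS.gsmooth_close hd hL hσ f hdiff hgrad x
  have hby := GS.gsmooth_close hd hL hσ f hdiff hgrad y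
  have hd1 : (1:ℝ) ≤ (d:ℝ) := by exact_mod_cast hd
  have hs : 0 < σ^2 * L * (d:ℝ) := by positivity
  have hyy : ε < f y - f xstar := lt_of_not_ge hy
  rw [abs_le] at hbx hby
  have h1 : gsmooth f σ x ≤ f x + L * σ^2 * d / 2 := by linarith [hbx.2]
  have h2 : f y - L * σ^2 * d / 2 ≤ gsmooth f σ y := by linarith [hby.1]
  nlinarith [hbx.1, hby.2]
end

section
/- Let d ≥ 1, L > 0, and let f : ℝ^d → ℝ be L-smooth with inf_{y ∈ ℝ^d} f(y) > −∞. Suppose the sublevel set f⋆(ε) = {x ∈ ℝ^d : f(x) − inf f ≤ ε} is bounded for some ε > 0, and let σ > 0 satisfy σ < √(4ε/(3Ld)). Then f_σ attains its minimum on ℝ^d, i.e. there exists x⋆_σ ∈ ℝ^d with f_σ(x⋆_σ) ≤ f_σ(x) for all x ∈ ℝ^d. -/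
open MeasureTheory
open scoped Classical

section GSAux
open Real
open scoped RealInnerProductSpace

variable {d : ℕ}

lemma moment1d : ∫ x : ℝ, x ^ 2 * Real.exp (-x ^ 2) = Real.sqrt Real.pi / 2 := by
  have hexp : Integrable fun x : ℝ => Real.exp (-x ^ 2) := by
    simpa using integrable_exp_neg_mul_sq (b := 1) one_pos
  have hsq : Integrable fun x : ℝ => x ^ 2 * Real.exp (-x ^ 2) := by
    have := integrable_rpow_mul_exp_neg_mul_sq (b := 1) one_pos (s := 2) (by norm_num)
    simpa [Real.rpow_two] using this
  have hF : ∀ x : ℝ, HasDerivAt (fun x : ℝ => -(x * Real.exp (-x ^ 2)) / 2)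
      (x ^ 2 * Real.exp (-x ^ 2) - Real.exp (-x ^ 2) / 2) x := by
    intro x
    have h1 : HasDerivAt (fun x : ℝ => -x ^ 2) (-(2 * x)) x := by
      simpa using ((hasDerivAt_pow 2 x).fun_neg)
    have h2 : HasDerivAt (fun x : ℝ => Real.exp (-x ^ 2)) (Real.exp (-x ^ 2) * (-(2 * x))) x :=
      (Real.hasDerivAt_exp _).comp x h1
    have h3 : HasDerivAt (fun x : ℝ => x * Real.exp (-x ^ 2))
        (1 * Real.exp (-x ^ 2) + x * (Real.exp (-x ^ 2) * (-(2 * x)))) x :=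
      (hasDerivAt_id x).mul h2
    have h4 : HasDerivAt (fun x : ℝ => -(x * Real.exp (-x ^ 2)) / 2)
        (-(1 * Real.exp (-x ^ 2) + x * (Real.exp (-x ^ 2) * (-(2 * x)))) / 2) x :=
      (h3.fun_neg).div_const 2
    convert h4 using 1
    ring
  have hFint : Integrable fun x : ℝ => -(x * Real.exp (-x ^ 2)) / 2 := by
    have := (integrable_mul_exp_neg_mul_sq (b := 1) one_pos).neg.div_const 2
    simpa using this
  have hzero := integral_eq_zero_of_hasDerivAt_of_integrable hF
    (hsq.sub (hexp.div_const 2)) hFint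
  have hsplit : ∫ x : ℝ, (x ^ 2 * Real.exp (-x ^ 2) - Real.exp (-x ^ 2) / 2)
      = (∫ x : ℝ, x ^ 2 * Real.exp (-x ^ 2)) - (∫ x : ℝ, Real.exp (-x ^ 2)) / 2 := by
    rw [integral_sub hsq (hexp.div_const 2), integral_div]
  have hg : ∫ x : ℝ, Real.exp (-x ^ 2) = Real.sqrt Real.pi := by
    simpa using integral_gaussian 1
  rw [hsplit, hg] at hzero
  linarith

lemma gs_symm_normsq (v : Fin d → ℝ) :
    ‖((MeasurableEquiv.toLp 2 (Fin d → ℝ)).symm).symm v‖ ^ 2 = ∑ i, (v i) ^ 2 := by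
  simp only [EuclideanSpace.norm_eq]
  rw [Real.sq_sqrt (Finset.sum_nonneg fun i _ => by positivity)]
  simp [MeasurableEquiv.toLp_apply, sq_abs]

lemma gs_int_exp : Integrable fun u : EuclideanSpace ℝ (Fin d) => Real.exp (-‖u‖ ^ 2) := by
  have mp := (EuclideanSpace.volume_preserving_symm_measurableEquiv_toLp (Fin d)).symm
  rw [← MeasurePreserving.integrable_comp_emb mp (MeasurableEquiv.measurableEmbedding _)]
  simp only [Function.comp_def, gs_symm_normsq]
  have : (fun v : Fin d → ℝ => Real.exp (-∑ i, (v i) ^ 2))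
      = fun v : Fin d → ℝ => ∏ i, Real.exp (-(v i) ^ 2) := by
    ext v; rw [← Real.exp_sum, ← Finset.sum_neg_distrib]
  rw [this]
  exact Integrable.fintype_prod (f := fun _ (x : ℝ) => Real.exp (-x ^ 2))
    fun i => by simpa using integrable_exp_neg_mul_sq (b := 1) one_pos

lemma gs_intval_exp :
    ∫ u : EuclideanSpace ℝ (Fin d), Real.exp (-‖u‖ ^ 2) = Real.sqrt Real.pi ^ d := by
  have mp := (EuclideanSpace.volume_preserving_symm_measurableEquiv_toLp (Fin d)).symm
  rw [← mp.integral_comp (MeasurableEquiv.measurableEmbedding _)]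
  simp only [gs_symm_normsq]
  have : (fun v : Fin d → ℝ => Real.exp (-∑ i, (v i) ^ 2))
      = fun v : Fin d → ℝ => ∏ i, (fun x : ℝ => Real.exp (-x ^ 2)) (v i) := by
    ext v; rw [← Real.exp_sum, ← Finset.sum_neg_distrib]
  rw [this, integral_fintype_prod_volume_eq_prod (fun _ (x : ℝ) => Real.exp (-x ^ 2)), Finset.prod_const]
  have hg : ∫ x : ℝ, Real.exp (-x ^ 2) = Real.sqrt Real.pi := by
    simpa using integral_gaussian 1
  simp [hg]



lemma prod_ite_eq_sq (v : Fin d → ℝ) (i : Fin d) :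
    ∏ j, (if j = i then (v j) ^ 2 * Real.exp (-(v j) ^ 2) else Real.exp (-(v j) ^ 2))
      = (v i) ^ 2 * ∏ j, Real.exp (-(v j) ^ 2) := by
  rw [← Finset.prod_erase_mul _ _ (Finset.mem_univ i),
    ← Finset.prod_erase_mul _ (fun j => Real.exp (-(v j) ^ 2)) (Finset.mem_univ i),
    Finset.prod_congr rfl (fun j hj => if_neg (Finset.ne_of_mem_erase hj)), if_pos rfl]
  ring

lemma gs_int_sq :
    Integrable fun u : EuclideanSpace ℝ (Fin d) => ‖u‖ ^ 2 * Real.exp (-‖u‖ ^ 2) := by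
  have mp := (EuclideanSpace.volume_preserving_symm_measurableEquiv_toLp (Fin d)).symm
  rw [← MeasurePreserving.integrable_comp_emb mp (MeasurableEquiv.measurableEmbedding _)]
  simp only [Function.comp_def, gs_symm_normsq]
  have : (fun v : Fin d → ℝ => (∑ i, (v i) ^ 2) * Real.exp (-∑ i, (v i) ^ 2))
      = fun v : Fin d → ℝ => ∑ i, ∏ j,
        (fun x : ℝ => if j = i then x ^ 2 * Real.exp (-x ^ 2) else Real.exp (-x ^ 2)) (v j) := by
    ext v
    simp only [prod_ite_eq_sq]
    rw [← Real.exp_sum, ← Finset.sum_neg_distrib, Finset.sum_mul]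
  rw [this]
  refine integrable_finset_sum _ fun i _ => ?_
  refine Integrable.fintype_prod
    (f := fun j (x : ℝ) => if j = i then x ^ 2 * Real.exp (-x ^ 2) else Real.exp (-x ^ 2))
    fun j => ?_
  by_cases h : j = i
  · simp only [if_pos h]
    have := integrable_rpow_mul_exp_neg_mul_sq (b := 1) one_pos (s := 2) (by norm_num)
    simpa [Real.rpow_two] using this
  · simp only [if_neg h]
    simpa using integrable_exp_neg_mul_sq (b := 1) one_pos

lemma gs_intval_sq (hd : 1 ≤ d) :
    ∫ u : EuclideanSpace ℝ (Fin d), ‖u‖ ^ 2 * Real.exp (-‖u‖ ^ 2)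
      = (d / 2 : ℝ) * Real.sqrt Real.pi ^ d := by
  have mp := (EuclideanSpace.volume_preserving_symm_measurableEquiv_toLp (Fin d)).symm
  rw [← mp.integral_comp (MeasurableEquiv.measurableEmbedding _)]
  simp only [gs_symm_normsq]
  have heq : (fun v : Fin d → ℝ => (∑ i, (v i) ^ 2) * Real.exp (-∑ i, (v i) ^ 2))
      = fun v : Fin d → ℝ => ∑ i, ∏ j,
        (fun x : ℝ => if j = i then x ^ 2 * Real.exp (-x ^ 2) else Real.exp (-x ^ 2)) (v j) := by
    ext v
    simp only [prod_ite_eq_sq]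
    rw [← Real.exp_sum, ← Finset.sum_neg_distrib, Finset.sum_mul]
  rw [heq]
  have hint : ∀ i : Fin d, Integrable (fun v : Fin d → ℝ => ∏ j,
      (fun x : ℝ => if j = i then x ^ 2 * Real.exp (-x ^ 2) else Real.exp (-x ^ 2)) (v j)) := by
    intro i
    refine Integrable.fintype_prod
      (f := fun j (x : ℝ) => if j = i then x ^ 2 * Real.exp (-x ^ 2) else Real.exp (-x ^ 2))
      fun j => ?_
    by_cases h : j = i
    · simp only [if_pos h]
      have := integrable_rpow_mul_exp_neg_mul_sq (b := 1) one_pos (s := 2) (by norm_num)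
      simpa [Real.rpow_two] using this
    · simp only [if_neg h]
      simpa using integrable_exp_neg_mul_sq (b := 1) one_pos
  rw [integral_finset_sum _ fun i _ => hint i]
  have hterm : ∀ i : Fin d, (∫ v : Fin d → ℝ, ∏ j,
      (fun x : ℝ => if j = i then x ^ 2 * Real.exp (-x ^ 2) else Real.exp (-x ^ 2)) (v j))
      = Real.sqrt Real.pi / 2 * Real.sqrt Real.pi ^ (d - 1) := by
    intro i
    have hg : ∫ x : ℝ, Real.exp (-x ^ 2) = Real.sqrt Real.pi := by
      simpa using integral_gaussian 1
    rw [integral_fintype_prod_volume_eq_prod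
      (fun j (x : ℝ) => if j = i then x ^ 2 * Real.exp (-x ^ 2) else Real.exp (-x ^ 2))]
    calc (∏ j, ∫ x : ℝ, if j = i then x ^ 2 * Real.exp (-x ^ 2) else Real.exp (-x ^ 2))
        = (∏ j ∈ Finset.univ.erase i,
            ∫ x : ℝ, if j = i then x ^ 2 * Real.exp (-x ^ 2) else Real.exp (-x ^ 2)) *
          ∫ x : ℝ, if i = i then x ^ 2 * Real.exp (-x ^ 2) else Real.exp (-x ^ 2) :=
        (Finset.prod_erase_mul _ _ (Finset.mem_univ i)).symm
      _ = (∏ _j ∈ Finset.univ.erase i, Real.sqrt Real.pi) * (Real.sqrt Real.pi / 2) := by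
          congr 1
          · refine Finset.prod_congr rfl fun j hj => ?_
            simp only [if_neg (Finset.ne_of_mem_erase hj)]
            exact hg
          · simp only [if_pos rfl, ite_true]
            exact moment1d
      _ = Real.sqrt Real.pi / 2 * Real.sqrt Real.pi ^ (d - 1) := by
          rw [Finset.prod_const, Finset.card_erase_of_mem (Finset.mem_univ i)]
          simp [mul_comm]
  rw [Finset.sum_congr rfl fun i _ => hterm i, Finset.sum_const]
  simp only [Finset.card_univ, Fintype.card_fin, nsmul_eq_mul]
  have : Real.sqrt Real.pi ^ d = Real.sqrt Real.pi ^ (d - 1) * Real.sqrt Real.pi := by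
    rw [← pow_succ, Nat.sub_add_cancel hd]
  rw [this]; ring

lemma gs_odd_zero (g : EuclideanSpace ℝ (Fin d)) :
    ∫ u : EuclideanSpace ℝ (Fin d), ⟪g, u⟫ * Real.exp (-‖u‖ ^ 2) = 0 := by
  have h := integral_neg_eq_self
    (fun u : EuclideanSpace ℝ (Fin d) => ⟪g, u⟫ * Real.exp (-‖u‖ ^ 2)) volume
  have h2 : (fun u : EuclideanSpace ℝ (Fin d) => ⟪g, -u⟫ * Real.exp (-‖(-u)‖ ^ 2))
      = fun u : EuclideanSpace ℝ (Fin d) => -(⟪g, u⟫ * Real.exp (-‖u‖ ^ 2)) := by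
    ext u; rw [inner_neg_right, norm_neg]; ring
  rw [h2] at h
  rw [integral_neg] at h
  linarith

lemma gs_taylor {L : ℝ} (hL0 : 0 ≤ L) (f : EuclideanSpace ℝ (Fin d) → ℝ)
    (hdiff : Differentiable ℝ f)
    (hgrad : ∀ x y, ‖gradient f x - gradient f y‖ ≤ L * ‖x - y‖)
    (x y : EuclideanSpace ℝ (Fin d)) :
    |f y - f x - ⟪gradient f x, y - x⟫| ≤ L / 2 * ‖y - x‖ ^ 2 := by
  set v := y - x with hv
  -- derivative of t ↦ f (x + t • v)
  have hder : ∀ t : ℝ, HasDerivAt (fun t : ℝ => f (x + t • v))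
      ⟪gradient f (x + t • v), v⟫ t := by
    intro t
    have hc : HasDerivAt (fun t : ℝ => x + t • v) v t := by
      simpa using ((hasDerivAt_id t).smul_const v).const_add x
    have hf : HasFDerivAt f (InnerProductSpace.toDual ℝ _ (gradient f (x + t • v)) :
        EuclideanSpace ℝ (Fin d) →L[ℝ] ℝ) (x + t • v) := by
      exact hasGradientAt_iff_hasFDerivAt.mp (hdiff (x + t • v)).hasGradientAt
    have := hf.comp_hasDerivAt t hc
    simpa [Function.comp_def] using this
  have hcont : Continuous fun t : ℝ => ⟪gradient f (x + t • v), v⟫ := by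
    have hlip : LipschitzWith (Real.toNNReal L) (gradient f) := by
      apply LipschitzWith.of_dist_le_mul
      intro a b
      rw [dist_eq_norm]
      calc ‖gradient f a - gradient f b‖ ≤ L * ‖a - b‖ := hgrad a b
        _ = (Real.toNNReal L) * dist a b := by
            rw [dist_eq_norm, Real.coe_toNNReal L hL0]
    have : Continuous fun t : ℝ => gradient f (x + t • v) :=
      hlip.continuous.comp (by continuity)
    exact (this.inner continuous_const)
  have hfund : f y - f x = ∫ t in (0:ℝ)..1, ⟪gradient f (x + t • v), v⟫ := by
    have := intervalIntegral.integral_eq_sub_of_hasDerivAt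
      (f := fun t : ℝ => f (x + t • v)) (a := 0) (b := 1)
      (fun t _ => hder t) (hcont.intervalIntegrable 0 1)
    rw [this]
    simp [hv]
  have key : f y - f x - ⟪gradient f x, v⟫
      = ∫ t in (0:ℝ)..1, (⟪gradient f (x + t • v), v⟫ - ⟪gradient f x, v⟫) := by
    rw [intervalIntegral.integral_sub (hcont.intervalIntegrable 0 1)
      (intervalIntegrable_const), hfund]
    simp
  rw [key]
  have hbd : ∀ t ∈ Set.Ioc (0:ℝ) 1,
      ‖⟪gradient f (x + t • v), v⟫ - ⟪gradient f x, v⟫‖ ≤ L * t * ‖v‖ ^ 2 := by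
    intro t ht
    rw [← inner_sub_left]
    calc ‖(⟪gradient f (x + t • v) - gradient f x, v⟫ : ℝ)‖
        ≤ ‖gradient f (x + t • v) - gradient f x‖ * ‖v‖ := norm_inner_le_norm _ _
      _ ≤ (L * ‖(x + t • v) - x‖) * ‖v‖ := by
          apply mul_le_mul_of_nonneg_right (hgrad _ _) (norm_nonneg v)
      _ = L * t * ‖v‖ ^ 2 := by
          rw [show (x + t • v) - x = t • v by abel, norm_smul]
          simp [abs_of_pos ht.1]
          ring
  have := intervalIntegral.norm_integral_le_abs_of_norm_le (μ := volume) (a := 0) (b := 1)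
    (f := fun t => ⟪gradient f (x + t • v), v⟫ - ⟪gradient f x, v⟫)
    (g := fun t => L * t * ‖v‖ ^ 2)
    (by
      rw [Set.uIoc_of_le (by norm_num : (0:ℝ) ≤ 1)]
      filter_upwards [ae_restrict_mem measurableSet_Ioc] with t ht
      exact hbd t ht)
    (Continuous.intervalIntegrable (by fun_prop) 0 1)
  calc |∫ t in (0:ℝ)..1, (⟪gradient f (x + t • v), v⟫ - ⟪gradient f x, v⟫)|
      ≤ |∫ t in (0:ℝ)..1, L * t * ‖v‖ ^ 2| := this
    _ = L / 2 * ‖v‖ ^ 2 := by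
        have : ∫ t in (0:ℝ)..1, L * t * ‖v‖ ^ 2 = L / 2 * ‖v‖ ^ 2 := by
          rw [show (fun t => L * t * ‖v‖ ^ 2) = fun t : ℝ => (L * ‖v‖ ^ 2) * t by ext t; ring]
          rw [intervalIntegral.integral_const_mul, integral_id]
          ring
        rw [this, abs_of_nonneg (by positivity)]

lemma gs_integrable_poly {h : EuclideanSpace ℝ (Fin d) → ℝ} (hc : Continuous h)
    (C₁ C₂ : ℝ) (hb : ∀ u, |h u| ≤ C₁ + C₂ * ‖u‖ ^ 2) :
    Integrable fun u : EuclideanSpace ℝ (Fin d) => h u * Real.exp (-‖u‖ ^ 2) := by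
  have hce : Continuous fun u : EuclideanSpace ℝ (Fin d) => Real.exp (-‖u‖ ^ 2) :=
    Real.continuous_exp.comp (continuous_norm.pow 2).neg
  refine Integrable.mono' ((gs_int_exp.const_mul C₁).add (gs_int_sq.const_mul C₂))
    ((hc.mul hce).aestronglyMeasurable) ?_
  filter_upwards with u
  rw [norm_mul, Real.norm_eq_abs, Real.norm_eq_abs, abs_of_pos (Real.exp_pos _)]
  calc |h u| * Real.exp (-‖u‖ ^ 2)
      ≤ (C₁ + C₂ * ‖u‖ ^ 2) * Real.exp (-‖u‖ ^ 2) :=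
        mul_le_mul_of_nonneg_right (hb u) (Real.exp_pos _).le
    _ = C₁ * Real.exp (-‖u‖ ^ 2) + C₂ * (‖u‖ ^ 2 * Real.exp (-‖u‖ ^ 2)) := by ring

lemma gs_pow_eq : Real.pi ^ (-(d : ℝ) / 2) = (Real.sqrt Real.pi ^ d)⁻¹ := by
  rw [show (-(d : ℝ) / 2) = -((d : ℝ) / 2) by ring, Real.rpow_neg Real.pi_pos.le]
  congr 1
  rw [show ((d : ℝ) / 2) = (1 / 2) * (d : ℕ) by push_cast; ring,
    Real.rpow_mul Real.pi_pos.le, Real.rpow_natCast]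
  congr 1
  rw [← Real.sqrt_eq_rpow]

end GSAux

section GSMain
open Real
open scoped RealInnerProductSpace

variable {d : ℕ}

lemma gs_key (hd : 1 ≤ d) {L σ : ℝ} (hL : 0 < L) (hσ : 0 < σ)
    (f : EuclideanSpace ℝ (Fin d) → ℝ)
    (hdiff : Differentiable ℝ f)
    (hgrad : ∀ x y, ‖gradient f x - gradient f y‖ ≤ L * ‖x - y‖)
    (x : EuclideanSpace ℝ (Fin d)) :
    |gsmooth f σ x - f x| ≤ L * σ ^ 2 * d / 4 := by
  set P := Real.sqrt Real.pi ^ d with hPdef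
  have hP : 0 < P := pow_pos (Real.sqrt_pos.mpr Real.pi_pos) d
  set g := gradient f x with hgdef
  set e := fun u : EuclideanSpace ℝ (Fin d) => Real.exp (-‖u‖ ^ 2) with hedef
  set r := fun u : EuclideanSpace ℝ (Fin d) => f (x + σ • u) - f x - σ * ⟪g, u⟫ with hrdef
  have htay : ∀ u, |r u| ≤ L * σ ^ 2 / 2 * ‖u‖ ^ 2 := by
    intro u
    have h := gs_taylor hL.le f hdiff hgrad x (x + σ • u)
    rw [add_sub_cancel_left] at h
    have hinner : ⟪g, σ • u⟫ = σ * ⟪g, u⟫ := real_inner_smul_right g u σ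
    have hnorm : ‖σ • u‖ ^ 2 = σ ^ 2 * ‖u‖ ^ 2 := by
      rw [norm_smul, mul_pow, Real.norm_eq_abs, sq_abs]
    rw [hinner, hnorm] at h
    calc |r u| ≤ L / 2 * (σ ^ 2 * ‖u‖ ^ 2) := h
      _ = L * σ ^ 2 / 2 * ‖u‖ ^ 2 := by ring
  have hrc : Continuous r := by
    have h1 : Continuous fun u : EuclideanSpace ℝ (Fin d) => x + σ • u :=
      continuous_const.add (by fun_prop)
    exact ((hdiff.continuous.comp h1).sub continuous_const).sub
      (continuous_const.mul (continuous_const.inner continuous_id))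
  have Int_r : Integrable fun u => r u * e u :=
    gs_integrable_poly hrc 0 (L * σ ^ 2 / 2) (fun u => by simpa using htay u)
  have Int_inner : Integrable fun u : EuclideanSpace ℝ (Fin d) => ⟪g, u⟫ * e u := by
    refine gs_integrable_poly (continuous_const.inner continuous_id) ‖g‖ ‖g‖ fun u => ?_
    have h1 : |(⟪g, u⟫ : ℝ)| ≤ ‖g‖ * ‖u‖ := abs_real_inner_le_norm g u
    nlinarith [norm_nonneg g, norm_nonneg u, sq_nonneg (‖u‖ - 1)]
  have Int_fx : Integrable fun u : EuclideanSpace ℝ (Fin d) => f x * e u :=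
    gs_int_exp.const_mul (f x)
  have hdecomp : (fun u : EuclideanSpace ℝ (Fin d) => f (x + σ • u) * e u)
      = fun u => (f x * e u + σ * (⟪g, u⟫ * e u)) + r u * e u := by
    ext u; simp only [hrdef]; ring
  have hIe : ∫ u : EuclideanSpace ℝ (Fin d), e u = P := gs_intval_exp
  have hIsq : ∫ u : EuclideanSpace ℝ (Fin d), ‖u‖ ^ 2 * e u = (d / 2 : ℝ) * P :=
    gs_intval_sq hd
  have hIodd : ∫ u : EuclideanSpace ℝ (Fin d), ⟪g, u⟫ * e u = 0 := gs_odd_zero g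
  have e1 : ∫ u : EuclideanSpace ℝ (Fin d),
      ((f x * e u + σ * (⟪g, u⟫ * e u)) + r u * e u)
      = (∫ u, (f x * e u + σ * (⟪g, u⟫ * e u))) + ∫ u, r u * e u :=
    integral_add (Int_fx.add (Int_inner.const_mul σ)) Int_r
  have e2 : ∫ u : EuclideanSpace ℝ (Fin d), (f x * e u + σ * (⟪g, u⟫ * e u))
      = (∫ u, f x * e u) + ∫ u, σ * (⟪g, u⟫ * e u) :=
    integral_add Int_fx (Int_inner.const_mul σ)
  have hIfull : ∫ u : EuclideanSpace ℝ (Fin d), f (x + σ • u) * e u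
      = f x * P + ∫ u, r u * e u := by
    rw [hdecomp, e1, e2, integral_const_mul, integral_const_mul, hIe, hIodd]
    ring
  have hIr : |∫ u : EuclideanSpace ℝ (Fin d), r u * e u| ≤ L * σ ^ 2 * d / 4 * P := by
    have hpt : ∀ u : EuclideanSpace ℝ (Fin d),
        ‖r u * e u‖ ≤ L * σ ^ 2 / 2 * (‖u‖ ^ 2 * e u) := by
      intro u
      rw [norm_mul, Real.norm_eq_abs, hedef, Real.norm_eq_abs, abs_of_pos (Real.exp_pos _)]
      calc |r u| * Real.exp (-‖u‖ ^ 2)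
          ≤ L * σ ^ 2 / 2 * ‖u‖ ^ 2 * Real.exp (-‖u‖ ^ 2) :=
            mul_le_mul_of_nonneg_right (htay u) (Real.exp_pos _).le
        _ = L * σ ^ 2 / 2 * (‖u‖ ^ 2 * Real.exp (-‖u‖ ^ 2)) := by ring
    have hb := norm_integral_le_of_norm_le (gs_int_sq.const_mul (L * σ ^ 2 / 2))
      (Filter.Eventually.of_forall hpt)
    rw [Real.norm_eq_abs] at hb
    refine hb.trans ?_
    rw [integral_const_mul, hIsq]
    ring_nf
    nlinarith [hP]
  have hgs : gsmooth f σ x = P⁻¹ * (f x * P + ∫ u, r u * e u) := by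
    rw [gsmooth, if_neg hσ.ne', gs_pow_eq, hIfull]
  rw [hgs]
  have : P⁻¹ * (f x * P + ∫ u, r u * e u) - f x = P⁻¹ * ∫ u, r u * e u := by
    field_simp
    ring
  rw [this, abs_mul, abs_of_pos (inv_pos.mpr hP)]
  calc P⁻¹ * |∫ u, r u * e u| ≤ P⁻¹ * (L * σ ^ 2 * d / 4 * P) := by
        exact mul_le_mul_of_nonneg_left hIr (inv_pos.mpr hP).le
    _ = L * σ ^ 2 * d / 4 := by field_simp

set_option maxHeartbeats 1000000 in
lemma gs_cont {L σ : ℝ} (hL0 : 0 ≤ L) (hσ : 0 < σ)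
    (f : EuclideanSpace ℝ (Fin d) → ℝ)
    (hdiff : Differentiable ℝ f)
    (hgrad : ∀ x y, ‖gradient f x - gradient f y‖ ≤ L * ‖x - y‖) :
    Continuous (gsmooth f σ) := by
  have hce : Continuous fun u : EuclideanSpace ℝ (Fin d) => Real.exp (-‖u‖ ^ 2) :=
    Real.continuous_exp.comp (continuous_norm.pow 2).neg
  have hgse : gsmooth f σ = fun x => Real.pi ^ (-(d : ℝ) / 2) *
      ∫ u : EuclideanSpace ℝ (Fin d), f (x + σ • u) * Real.exp (-‖u‖ ^ 2) := by
    ext x; rw [gsmooth, if_neg hσ.ne']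
  rw [hgse]
  refine continuous_const.mul (continuous_iff_continuousAt.mpr fun x₀ => ?_)
  set g₀ := gradient f x₀ with hg₀
  set C₁ := |f x₀| + 2 * ‖g₀‖ + L with hC₁
  set C₂ := (‖g₀‖ + L) * σ ^ 2 with hC₂
  refine continuousAt_of_dominated (bound := fun u =>
      C₁ * Real.exp (-‖u‖ ^ 2) + C₂ * (‖u‖ ^ 2 * Real.exp (-‖u‖ ^ 2)))
    (Filter.Eventually.of_forall fun y => ?_) ?_
    ((gs_int_exp.const_mul C₁).add (gs_int_sq.const_mul C₂))
    (Filter.Eventually.of_forall fun u => ?_)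
  · have h1 : Continuous fun u : EuclideanSpace ℝ (Fin d) => y + σ • u :=
      continuous_const.add (by fun_prop)
    exact ((hdiff.continuous.comp h1).mul hce).aestronglyMeasurable
  · filter_upwards [Metric.closedBall_mem_nhds x₀ one_pos] with y hy
    refine Filter.Eventually.of_forall fun u => ?_
    have hw : ‖y + σ • u - x₀‖ ≤ 1 + σ * ‖u‖ := by
      calc ‖y + σ • u - x₀‖ = ‖(y - x₀) + σ • u‖ := by rw [add_sub_right_comm]
        _ ≤ ‖y - x₀‖ + ‖σ • u‖ := norm_add_le _ _
        _ ≤ 1 + σ * ‖u‖ := by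
            rw [norm_smul, Real.norm_eq_abs, abs_of_pos hσ]
            exact add_le_add (by simpa [dist_eq_norm] using hy) le_rfl
    have htay := gs_taylor hL0 f hdiff hgrad x₀ (y + σ • u)
    have hinner : |(⟪g₀, y + σ • u - x₀⟫ : ℝ)| ≤ ‖g₀‖ * ‖y + σ • u - x₀‖ :=
      abs_real_inner_le_norm _ _
    have habs : |f (y + σ • u)| ≤ |f x₀| + ‖g₀‖ * ‖y + σ • u - x₀‖
        + L / 2 * ‖y + σ • u - x₀‖ ^ 2 := by
      have h1 := abs_le.mp htay
      have h2 := abs_le.mp hinner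
      have h3 := le_abs_self (f x₀)
      have h4 := neg_abs_le (f x₀)
      rw [abs_le]
      constructor <;> linarith
    rw [norm_mul, Real.norm_eq_abs, Real.norm_eq_abs, abs_of_pos (Real.exp_pos _)]
    have hbd : |f (y + σ • u)| ≤ C₁ + C₂ * ‖u‖ ^ 2 := by
      have hwn : 0 ≤ ‖y + σ • u - x₀‖ := norm_nonneg _
      have hun : 0 ≤ ‖u‖ := norm_nonneg u
      have hgn : 0 ≤ ‖g₀‖ := norm_nonneg g₀
      set t := σ * ‖u‖ with ht
      set w := ‖y + σ • u - x₀‖ with hwdef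
      have ht0 : 0 ≤ t := mul_nonneg hσ.le hun
      have hL2 : (0:ℝ) ≤ L / 2 := by linarith
      have hw2 : w ^ 2 ≤ (1 + t) ^ 2 := by
        have h1t : (0:ℝ) ≤ 1 + t := by linarith
        nlinarith [mul_le_mul hw hw hwn h1t]
      have f13 : ‖g₀‖ * w ≤ 2 * ‖g₀‖ + ‖g₀‖ * t ^ 2 := by
        nlinarith [mul_le_mul_of_nonneg_left hw hgn, mul_nonneg hgn (sq_nonneg (t - 1))]
      have f24 : L / 2 * w ^ 2 ≤ L + L * t ^ 2 := by
        nlinarith [mul_le_mul_of_nonneg_left hw2 hL2, mul_nonneg hL2 (sq_nonneg (t - 1))]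
      have hgoal : C₁ + C₂ * ‖u‖ ^ 2
          = (|f x₀| + 2 * ‖g₀‖ + L) + (‖g₀‖ * t ^ 2 + L * t ^ 2) := by
        rw [hC₁, hC₂, ht]; ring
      linarith [habs, f13, f24, hgoal]
    calc |f (y + σ • u)| * Real.exp (-‖u‖ ^ 2)
        ≤ (C₁ + C₂ * ‖u‖ ^ 2) * Real.exp (-‖u‖ ^ 2) :=
          mul_le_mul_of_nonneg_right hbd (Real.exp_pos _).le
      _ = C₁ * Real.exp (-‖u‖ ^ 2) + C₂ * (‖u‖ ^ 2 * Real.exp (-‖u‖ ^ 2)) := by ring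
  · have h1 : Continuous fun y : EuclideanSpace ℝ (Fin d) => y + σ • u :=
      continuous_id.add continuous_const
    exact ((hdiff.continuous.comp h1).mul continuous_const).continuousAt

end GSMain

/-- If the sublevel set `f⋆(ε)` is bounded for some `ε > 0` and
`0 < σ < √(4ε/(3Ld))`, then `f_σ` attains its minimum. -/
theorem gsmooth_min_exists {d : ℕ} (hd : 1 ≤ d) {L σ ε : ℝ} (hL : 0 < L)
    (f : EuclideanSpace ℝ (Fin d) → ℝ)
    (hdiff : Differentiable ℝ f)
    (hgrad : ∀ x y, ‖gradient f x - gradient f y‖ ≤ L * ‖x - y‖)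
    (hbdd : BddBelow (Set.range f))
    (hε : 0 < ε)
    (hbound : Bornology.IsBounded
      {x : EuclideanSpace ℝ (Fin d) | f x - (⨅ y, f y) ≤ ε})
    (hσ : 0 < σ) (hσ' : σ < Real.sqrt (4 * ε / (3 * L * d))) :
    ∃ xsig : EuclideanSpace ℝ (Fin d), ∀ x, gsmooth f σ xsig ≤ gsmooth f σ x := by
  set m := ⨅ y, f y with hm
  set c := L * σ ^ 2 * d / 4 with hc
  have hd0 : (0 : ℝ) < d := by exact_mod_cast Nat.lt_of_lt_of_le Nat.zero_lt_one hd
  have hσ2 : σ ^ 2 < 4 * ε / (3 * L * d) := (Real.lt_sqrt hσ.le).mp hσ'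
  have hcε : c < ε / 3 := by
    have h1 : L * (4 * ε / (3 * L * d)) * d / 4 = ε / 3 := by field_simp
    nlinarith [mul_pos hL hd0]
  have hc0 : 0 ≤ c := by positivity
  have key := gs_key hd hL hσ f hdiff hgrad
  have hcont := gs_cont hL.le hσ f hdiff hgrad
  have hmle : ∀ x, m ≤ f x := fun x => ciInf_le hbdd x
  obtain ⟨x₀, hx₀⟩ : ∃ x₀, f x₀ < m + ε / 6 :=
    exists_lt_of_ciInf_lt (lt_add_of_pos_right m (by positivity))
  set S := {x : EuclideanSpace ℝ (Fin d) | gsmooth f σ x ≤ gsmooth f σ x₀} with hS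
  have hsub : S ⊆ {x : EuclideanSpace ℝ (Fin d) | f x - m ≤ ε} := by
    intro x hx
    have hx' : gsmooth f σ x ≤ gsmooth f σ x₀ := hx
    have h1 := (abs_le.mp (key x)).1
    have h2 := (abs_le.mp (key x₀)).2
    show f x - m ≤ ε
    linarith [h1, h2, hx', hx₀, hcε, hc0, hc]
  have hS_closed : IsClosed S := isClosed_le hcont continuous_const
  have hS_cpt : IsCompact S :=
    Metric.isCompact_of_isClosed_isBounded hS_closed (hbound.subset hsub)
  obtain ⟨xs, hxsmem, hxsmin⟩ := hS_cpt.exists_isMinOn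
    ⟨x₀, show gsmooth f σ x₀ ≤ gsmooth f σ x₀ from le_rfl⟩ hcont.continuousOn
  refine ⟨xs, fun x => ?_⟩
  by_cases hx : gsmooth f σ x ≤ gsmooth f σ x₀
  · exact isMinOn_iff.mp hxsmin x hx
  · push_neg at hx
    exact le_trans (isMinOn_iff.mp hxsmin x₀
      (show gsmooth f σ x₀ ≤ gsmooth f σ x₀ from le_rfl)) hx.le
end
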